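/- arXiv:2201.05498 — 3 statements merged into one kernel-verified Lean document; each statement's English description precedes it below -/
import Mathlib

section
/- For every k ∈ ℕ, every finite set J ⊆ {k−τ, …, k−1} ∩ ℕ such that x^k = x̂^k + Σ_{h∈J} (x^{h+1} − x^h), and every x ∈ H, one has ⟨∇f(x̂^k), x − x^k⟩ ≤ f(x) − f(x^k) + (τ L_res / 2) · Σ_{h∈J} ‖x^h − x^{h+1}‖². -/
open MeasureTheory ProbabilityTheory Filter Topology Set
open scoped BigOperators RealInnerProductSpace ENNReal

noncomputable section

set_option synthInstance.maxHeartbeats 400000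
set_option maxHeartbeats 1000000

variable {m : ℕ} {H : Fin m → Type*}
  [∀ i, NormedAddCommGroup (H i)] [∀ i, InnerProductSpace ℝ (H i)]

/-- The Hilbert direct sum `H = H₁ ⊕ ⋯ ⊕ H_m` is complete when each factor is. -/
instance [∀ i, CompleteSpace (H i)] : CompleteSpace (PiLp 2 H) :=
  inferInstance

/-- Weighted squared norm `∑ i, w i * ‖u i‖²` on the direct sum. -/
def wnormSq (w : Fin m → ℝ) (u : PiLp 2 H) : ℝ := ∑ i, w i * ‖u i‖ ^ 2

/-- Weighted inner product `∑ i, w i * ⟪u i, v i⟫` on the direct sum. -/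
def winner (w : Fin m → ℝ) (u v : PiLp 2 H) : ℝ := ∑ i, w i * ⟪u i, v i⟫

/-- `upd x i u` replaces the `i`-th coordinate of `x` by `u`. -/
def upd (x : PiLp 2 H) (i : Fin m) (u : H i) : PiLp 2 H := WithLp.toLp 2 (Function.update x i u)

/-- `IsProx c gi v pt` asserts that `pt` is the unique minimizer of
`u ↦ gi u + (1/(2c))‖u − v‖²`, i.e. `pt = prox_{c·gi}(v)`. -/
def IsProx {E : Type*} [NormedAddCommGroup E] (c : ℝ) (gi : E → ℝ) (v pt : E) : Prop :=
  (∀ u : E, gi pt + 1 / (2 * c) * ‖pt - v‖ ^ 2 ≤ gi u + 1 / (2 * c) * ‖u - v‖ ^ 2) ∧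
  (∀ u : E, gi u + 1 / (2 * c) * ‖u - v‖ ^ 2 ≤ gi pt + 1 / (2 * c) * ‖pt - v‖ ^ 2 → u = pt)

/-- The objective `F = f + g`, where `g x = ∑ i, g i (x i)`. -/
def Fobj (f : PiLp 2 H → ℝ) (g : ∀ i, H i → ℝ) (z : PiLp 2 H) : ℝ := f z + ∑ i, g i (z i)

/-- Delayed iterate `x̂^k`, coordinate `j` reads `x^{k - d^k_j}` (deterministic trajectory,
indices in `ℤ`, with `x^n = x^0` for `n ≤ 0`). -/
def xhatD (x : ℤ → PiLp 2 H) (d : ℕ → Fin m → ℕ) (k : ℕ) : PiLp 2 H :=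
  WithLp.toLp 2 (fun j => x ((k : ℤ) - d k j) j)

/-- Delayed iterate `x̂^k` (random trajectory). -/
def xhatP {Ω : Type*} (x : ℤ → Ω → PiLp 2 H) (d : ℕ → Fin m → ℕ) (k : ℕ) (ω : Ω) :
    PiLp 2 H :=
  WithLp.toLp 2 (fun j => x ((k : ℤ) - d k j) ω j)

/-- `alphaT c τ x k = c * ∑_{h=k-τ}^{k-1} (h-(k-τ)+1) ‖x^{h+1} - x^h‖²`. -/
def alphaT (c : ℝ) (τ : ℕ) (x : ℤ → PiLp 2 H) (k : ℕ) : ℝ :=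
  c * ∑ j ∈ Finset.range τ,
    ((j : ℝ) + 1) * ‖x ((k : ℤ) - τ + j + 1) - x ((k : ℤ) - τ + j)‖ ^ 2

/-- `alphaV p c τ x k ω = c * ∑_{h=k-τ}^{k-1} (h-(k-τ)+1) ‖x^{h+1} - x^h‖²_V`. -/
def alphaV {Ω : Type*} (p : Fin m → ℝ) (c : ℝ) (τ : ℕ) (x : ℤ → Ω → PiLp 2 H)
    (k : ℕ) (ω : Ω) : ℝ :=
  c * ∑ j ∈ Finset.range τ,
    ((j : ℝ) + 1) * wnormSq p (x ((k : ℤ) - τ + j + 1) ω - x ((k : ℤ) - τ + j) ω)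

/-- The constant `L_res^V/(2√p_max)` appearing in `α_k`, where `L_res^V = L_res √(p_max/p_min)`. -/
def alphaConst (Lres pmax pmin : ℝ) : ℝ :=
  Lres * Real.sqrt (pmax / pmin) / (2 * Real.sqrt pmax)

/-- The σ-algebra generated by `i_0, …, i_{k-1}`. -/
def pastFiltration {Ω : Type*} [MeasurableSpace Ω] (idx : ℕ → Ω → Fin m) (k : ℕ) :
    MeasurableSpace Ω :=
  ⨆ j ∈ Finset.range k, MeasurableSpace.comap (idx j) ⊤

/-- The random index set `J(k) = {h ∈ {k-τ,…,k-1} : d^k_{i_h} ≥ k-h}`. -/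
def Jset {Ω : Type*} (idx : ℕ → Ω → Fin m) (d : ℕ → Fin m → ℕ) (τ k : ℕ) (ω : Ω) :
    Finset ℕ :=
  (Finset.Ico (k - τ) k).filter fun h => k - h ≤ d k (idx h ω)

/-- Coordinate norm is at most the full norm in `PiLp 2`. -/
lemma coord_norm_le' (v : PiLp 2 H) (i : Fin m) : ‖v i‖ ≤ ‖v‖ := by
  have h1 : ‖v i‖ ^ 2 ≤ ‖v‖ ^ 2 := by
    rw [PiLp.norm_sq_eq_of_L2]
    exact Finset.single_le_sum (f := fun j => ‖v j‖ ^ 2) (fun j _ => by positivity)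
      (Finset.mem_univ i)
  nlinarith [norm_nonneg (v i), norm_nonneg v]

/-- A vector supported at coordinate `i` added to `z` is a coordinate update of `z`. -/
lemma add_single_eq_upd (z Δ : PiLp 2 H) (i : Fin m) (hΔ : ∀ j, j ≠ i → Δ j = 0) :
    z + Δ = upd z i (z i + Δ i) := by
  ext j
  by_cases hj : j = i
  · subst hj; simp [upd]
  · simp [upd, Function.update_of_ne hj, PiLp.add_apply, hΔ j hj]

section AuxLemmas

variable (f : PiLp 2 H → ℝ) (f' : PiLp 2 H → PiLp 2 H) (Lres : ℝ)

/-- One-coordinate Lipschitz bound for the gradient. -/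
lemma grad_lip_single (hL : 0 ≤ Lres)
    (hf_lip : ∀ (z : PiLp 2 H) (i : Fin m) (u u' : H i),
      ‖f' (upd z i u) - f' (upd z i u')‖ ≤ Lres * ‖u - u'‖)
    (z Δ : PiLp 2 H) (i : Fin m) (hΔ : ∀ j, j ≠ i → Δ j = 0) :
    ‖f' (z + Δ) - f' z‖ ≤ Lres * ‖Δ‖ := by
  have h1 : z + Δ = upd z i (z i + Δ i) := add_single_eq_upd z Δ i hΔ
  have h2 : z = upd z i (z i) := by
    ext j; by_cases hj : j = i
    · subst hj; simp [upd]
    · simp [upd, Function.update_of_ne hj]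
  calc ‖f' (z + Δ) - f' z‖ = ‖f' (upd z i (z i + Δ i)) - f' (upd z i (z i))‖ := by
        rw [← h1, ← h2]
    _ ≤ Lres * ‖(z i + Δ i) - z i‖ := hf_lip z i _ _
    _ = Lres * ‖Δ i‖ := by rw [add_sub_cancel_left]
    _ ≤ Lres * ‖Δ‖ := by
        have := coord_norm_le' Δ i
        exact mul_le_mul_of_nonneg_left this hL

/-- Gradient-Lipschitz bound along a chain of single-coordinate moves. -/
lemma grad_lip_chain (hL : 0 ≤ Lres)
    (hf_lip : ∀ (z : PiLp 2 H) (i : Fin m) (u u' : H i),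
      ‖f' (upd z i u) - f' (upd z i u')‖ ≤ Lres * ‖u - u'‖)
    (y : PiLp 2 H) (Δ : ℕ → PiLp 2 H) :
    ∀ (J : Finset ℕ), (∀ h ∈ J, ∃ i : Fin m, ∀ j, j ≠ i → Δ h j = 0) →
      ‖f' (y + ∑ h ∈ J, Δ h) - f' y‖ ≤ Lres * ∑ h ∈ J, ‖Δ h‖ := by
  intro J
  induction J using Finset.induction_on with
  | empty => simp
  | @insert a s ha ih =>
    intro hsupp
    obtain ⟨i, hi⟩ := hsupp a (Finset.mem_insert_self a s)
    have ihs := ih fun h hh => hsupp h (Finset.mem_insert_of_mem hh)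
    rw [Finset.sum_insert ha, Finset.sum_insert ha]
    have hre : y + (Δ a + ∑ h ∈ s, Δ h) = (y + ∑ h ∈ s, Δ h) + Δ a := by abel
    rw [hre]
    calc ‖f' ((y + ∑ h ∈ s, Δ h) + Δ a) - f' y‖
        ≤ ‖f' ((y + ∑ h ∈ s, Δ h) + Δ a) - f' (y + ∑ h ∈ s, Δ h)‖ +
            ‖f' (y + ∑ h ∈ s, Δ h) - f' y‖ := norm_sub_le_norm_sub_add_norm_sub _ _ _
      _ ≤ Lres * ‖Δ a‖ + Lres * ∑ h ∈ s, ‖Δ h‖ := by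
          exact add_le_add (grad_lip_single f' Lres hL hf_lip _ _ i hi) ihs
      _ = Lres * (‖Δ a‖ + ∑ h ∈ s, ‖Δ h‖) := by ring

/-- Derivative of `f` along a line, from the gradient. -/
lemma hasDerivAt_line [∀ i, CompleteSpace (H i)] (hgrad : ∀ z : PiLp 2 H, HasGradientAt f (f' z) z)
    (a v : PiLp 2 H) (t : ℝ) :
    HasDerivAt (fun s : ℝ => f (a + s • v)) ⟪f' (a + t • v), v⟫ t := by
  have h1 : HasDerivAt (fun s : ℝ => a + s • v) v t := by
    simpa using ((hasDerivAt_id t).smul_const v).const_add a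
  have h2 := (hgrad (a + t • v)).hasFDerivAt
  have h3 := h2.comp_hasDerivAt t h1
  simp [InnerProductSpace.toDual_apply_apply] at h3
  exact h3

/-- Descent lemma along a single-coordinate move. -/
lemma descent_single [∀ i, CompleteSpace (H i)] (hgrad : ∀ z : PiLp 2 H, HasGradientAt f (f' z) z)
    (hL : 0 ≤ Lres)
    (hf_lip : ∀ (z : PiLp 2 H) (i : Fin m) (u u' : H i),
      ‖f' (upd z i u) - f' (upd z i u')‖ ≤ Lres * ‖u - u'‖)
    (z Δ : PiLp 2 H) (i : Fin m) (hΔ : ∀ j, j ≠ i → Δ j = 0) :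
    f (z + Δ) ≤ f z + ⟪f' z, Δ⟫ + Lres / 2 * ‖Δ‖ ^ 2 := by
  have hline := hasDerivAt_line f f' hgrad z Δ
  -- continuity of the integrand
  have hlip : ∀ t s : ℝ, ‖f' (z + t • Δ) - f' (z + s • Δ)‖ ≤ Lres * ‖Δ‖ * |t - s| := by
    intro t s
    have hsupp : ∀ j, j ≠ i → ((t - s) • Δ) j = 0 := by
      intro j hj; simp [hΔ j hj]
    have hrw : z + t • Δ = (z + s • Δ) + (t - s) • Δ := by
      have hts : s + (t - s) = t := by ring
      rw [add_assoc, ← add_smul, hts]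
    rw [hrw]
    calc ‖f' ((z + s • Δ) + (t - s) • Δ) - f' (z + s • Δ)‖
        ≤ Lres * ‖(t - s) • Δ‖ := grad_lip_single f' Lres hL hf_lip _ _ i hsupp
      _ = Lres * ‖Δ‖ * |t - s| := by rw [norm_smul, Real.norm_eq_abs]; ring
  have hcont : Continuous fun t : ℝ => ⟪f' (z + t • Δ), Δ⟫ := by
    apply LipschitzWith.continuous (K := Real.toNNReal (Lres * ‖Δ‖ * ‖Δ‖))
    apply LipschitzWith.of_dist_le_mul
    intro t s
    rw [Real.dist_eq, Real.dist_eq]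
    have h1 : ⟪f' (z + t • Δ), Δ⟫ - ⟪f' (z + s • Δ), Δ⟫ =
        ⟪f' (z + t • Δ) - f' (z + s • Δ), Δ⟫ := by rw [inner_sub_left]
    rw [h1]
    calc |⟪f' (z + t • Δ) - f' (z + s • Δ), Δ⟫| ≤
        ‖f' (z + t • Δ) - f' (z + s • Δ)‖ * ‖Δ‖ := abs_real_inner_le_norm _ _
      _ ≤ Lres * ‖Δ‖ * |t - s| * ‖Δ‖ := by
          have := hlip t s
          have h0 : (0:ℝ) ≤ ‖Δ‖ := norm_nonneg _
          nlinarith [abs_nonneg (t - s)]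
      _ ≤ (Real.toNNReal (Lres * ‖Δ‖ * ‖Δ‖) : ℝ) * |t - s| := by
          rw [Real.coe_toNNReal _ (by positivity)]; ring_nf; rfl
  have hint : IntervalIntegrable (fun t : ℝ => ⟪f' (z + t • Δ), Δ⟫)
      MeasureTheory.volume 0 1 := hcont.intervalIntegrable 0 1
  have key : f (z + Δ) - f z = ∫ t in (0:ℝ)..1, ⟪f' (z + t • Δ), Δ⟫ := by
    have h := intervalIntegral.integral_eq_sub_of_hasDerivAt
      (f := fun t : ℝ => f (z + t • Δ))
      (fun t _ => hline t) hint
    simpa using h.symm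
  have hcont2 : Continuous fun t : ℝ => ⟪f' z, Δ⟫ + Lres * ‖Δ‖ ^ 2 * t := by
    continuity
  have hint2 : IntervalIntegrable (fun t : ℝ => ⟪f' z, Δ⟫ + Lres * ‖Δ‖ ^ 2 * t)
      MeasureTheory.volume 0 1 := hcont2.intervalIntegrable 0 1
  have hmono : (∫ t in (0:ℝ)..1, ⟪f' (z + t • Δ), Δ⟫) ≤
      ∫ t in (0:ℝ)..1, (⟪f' z, Δ⟫ + Lres * ‖Δ‖ ^ 2 * t) := by
    apply intervalIntegral.integral_mono_on (by norm_num) hint hint2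
    intro t ht
    rcases ht with ⟨ht0, _⟩
    have hsupp : ∀ j, j ≠ i → (t • Δ) j = 0 := by intro j hj; simp [hΔ j hj]
    have hgl : ‖f' (z + t • Δ) - f' z‖ ≤ Lres * ‖t • Δ‖ :=
      grad_lip_single f' Lres hL hf_lip _ _ i hsupp
    have h1 : ⟪f' (z + t • Δ), Δ⟫ - ⟪f' z, Δ⟫ = ⟪f' (z + t • Δ) - f' z, Δ⟫ := by
      rw [inner_sub_left]
    have h2 : ⟪f' (z + t • Δ) - f' z, Δ⟫ ≤ ‖f' (z + t • Δ) - f' z‖ * ‖Δ‖ :=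
      real_inner_le_norm _ _
    have h3 : ‖t • Δ‖ = t * ‖Δ‖ := by
      rw [norm_smul, Real.norm_eq_abs, abs_of_nonneg ht0]
    rw [h3] at hgl
    have h4 : ‖f' (z + t • Δ) - f' z‖ * ‖Δ‖ ≤ Lres * (t * ‖Δ‖) * ‖Δ‖ :=
      mul_le_mul_of_nonneg_right hgl (norm_nonneg Δ)
    have h5 : Lres * (t * ‖Δ‖) * ‖Δ‖ = Lres * ‖Δ‖ ^ 2 * t := by ring
    linarith
  have hcalc : (∫ t in (0:ℝ)..1, (⟪f' z, Δ⟫ + Lres * ‖Δ‖ ^ 2 * t)) =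
      ⟪f' z, Δ⟫ + Lres / 2 * ‖Δ‖ ^ 2 := by
    have hcont3 : Continuous fun t : ℝ => Lres * ‖Δ‖ ^ 2 * t := by continuity
    rw [intervalIntegral.integral_add intervalIntegrable_const
      (hcont3.intervalIntegrable 0 1),
      intervalIntegral.integral_const, intervalIntegral.integral_const_mul,
      integral_id]
    norm_num; ring
  linarith [key, hmono, hcalc ▸ hmono]

/-- First-order characterization of convexity via the gradient. -/
lemma convex_grad_ineq [∀ i, CompleteSpace (H i)] (hgrad : ∀ z : PiLp 2 H, HasGradientAt f (f' z) z)
    (hconv : ConvexOn ℝ Set.univ f) (a b : PiLp 2 H) :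
    f a + ⟪f' a, b - a⟫ ≤ f b := by
  set g : ℝ → ℝ := fun t => f (a + t • (b - a)) with hg
  have hgconv : ConvexOn ℝ Set.univ g := by
    have h := hconv.comp_affineMap (AffineMap.lineMap a b : ℝ →ᵃ[ℝ] PiLp 2 H)
    have hfun : (f ∘ (AffineMap.lineMap a b : ℝ →ᵃ[ℝ] PiLp 2 H)) = g := by
      funext t
      simp only [Function.comp_apply, AffineMap.lineMap_apply_module, g]
      congr 1
      rw [sub_smul, one_smul, smul_sub]
      abel
    rw [hfun] at h
    simpa using h
  have hderiv : HasDerivAt g ⟪f' a, b - a⟫ 0 := by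
    have := hasDerivAt_line f f' hgrad a (b - a) 0
    simpa [g] using this
  have hslope := hgconv.le_slope_of_hasDerivAt (Set.mem_univ (0:ℝ)) (Set.mem_univ (1:ℝ))
    zero_lt_one hderiv
  have hg0 : g 0 = f a := by simp [g]
  have hg1 : g 1 = f b := by simp [g]
  rw [slope_def_field] at hslope
  simp only [hg0, hg1] at hslope
  have : ⟪f' a, b - a⟫ ≤ f b - f a := by
    simpa using hslope
  linarith

/-- Descent lemma along a chain of single-coordinate moves. -/
lemma descent_chain [∀ i, CompleteSpace (H i)] (hgrad : ∀ z : PiLp 2 H, HasGradientAt f (f' z) z)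
    (hL : 0 ≤ Lres)
    (hf_lip : ∀ (z : PiLp 2 H) (i : Fin m) (u u' : H i),
      ‖f' (upd z i u) - f' (upd z i u')‖ ≤ Lres * ‖u - u'‖)
    (y : PiLp 2 H) (Δ : ℕ → PiLp 2 H) :
    ∀ (J : Finset ℕ), (∀ h ∈ J, ∃ i : Fin m, ∀ j, j ≠ i → Δ h j = 0) →
      f (y + ∑ h ∈ J, Δ h) ≤ f y + ⟪f' y, ∑ h ∈ J, Δ h⟫ +
        Lres / 2 * (∑ h ∈ J, ‖Δ h‖) ^ 2 := by
  intro J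
  induction J using Finset.induction_on with
  | empty => simp
  | @insert a s ha ih =>
    intro hsupp
    obtain ⟨i, hi⟩ := hsupp a (Finset.mem_insert_self a s)
    have hsupps := fun h hh => hsupp h (Finset.mem_insert_of_mem hh)
    have ihs := ih hsupps
    simp only [Finset.sum_insert ha]
    set S := ∑ h ∈ s, Δ h with hS
    have hre : y + (Δ a + S) = (y + S) + Δ a := by abel
    rw [hre]
    have hstep : f ((y + S) + Δ a) ≤ f (y + S) + ⟪f' (y + S), Δ a⟫ +
        Lres / 2 * ‖Δ a‖ ^ 2 :=
      descent_single f f' Lres hgrad hL hf_lip _ _ i hi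
    have hchain : ‖f' (y + S) - f' y‖ ≤ Lres * ∑ h ∈ s, ‖Δ h‖ :=
      grad_lip_chain f' Lres hL hf_lip y Δ s hsupps
    have hinner : ⟪f' (y + S), Δ a⟫ ≤ ⟪f' y, Δ a⟫ + (Lres * ∑ h ∈ s, ‖Δ h‖) * ‖Δ a‖ := by
      have h1 : ⟪f' (y + S), Δ a⟫ - ⟪f' y, Δ a⟫ = ⟪f' (y + S) - f' y, Δ a⟫ := by
        rw [inner_sub_left]
      have h2 : ⟪f' (y + S) - f' y, Δ a⟫ ≤ ‖f' (y + S) - f' y‖ * ‖Δ a‖ :=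
        real_inner_le_norm _ _
      nlinarith [norm_nonneg (Δ a), norm_nonneg (f' (y + S) - f' y)]
    have hadd : ⟪f' y, Δ a + S⟫ = ⟪f' y, Δ a⟫ + ⟪f' y, S⟫ := inner_add_right _ _ _
    have hsq : (‖Δ a‖ + ∑ h ∈ s, ‖Δ h‖) ^ 2 =
        ‖Δ a‖ ^ 2 + 2 * ‖Δ a‖ * (∑ h ∈ s, ‖Δ h‖) + (∑ h ∈ s, ‖Δ h‖) ^ 2 := by ring
    rw [hadd]
    nlinarith [ihs, hstep, hinner]

end AuxLemmas

/-- For every `k`, every finite `J ⊆ {k-τ,…,k-1} ∩ ℕ` with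
`x^k = x̂^k + ∑_{h∈J} (x^{h+1} - x^h)`, and every `z ∈ H`,
`⟪∇f(x̂^k), z - x^k⟫ ≤ f z - f (x^k) + (τ L_res / 2) ∑_{h∈J} ‖x^h - x^{h+1}‖²`. -/
theorem stmt2
    [∀ i, CompleteSpace (H i)]
    (hm : 0 < m)
    (τ : ℕ) (d : ℕ → Fin m → ℕ) (hd : ∀ (k : ℕ) (j : Fin m), d k j ≤ min k τ)
    (idx : ℕ → Fin m)
    (x : ℤ → PiLp 2 H) (x0 : PiLp 2 H)
    (hx_init : ∀ n : ℤ, n ≤ 0 → x n = x0)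
    (hx_agree : ∀ (k : ℕ) (j : Fin m), j ≠ idx k → x ((k : ℤ) + 1) j = x (k : ℤ) j)
    (f : PiLp 2 H → ℝ) (f' : PiLp 2 H → PiLp 2 H)
    (hf_grad : ∀ z : PiLp 2 H, HasGradientAt f (f' z) z)
    (Lres : ℝ) (hLres_pos : 0 < Lres)
    (hf_lip_res : ∀ (z : PiLp 2 H) (i : Fin m) (u u' : H i),
      ‖f' (upd z i u) - f' (upd z i u')‖ ≤ Lres * ‖u - u'‖)
    (hf_convex : ConvexOn ℝ Set.univ f) :
    ∀ (k : ℕ) (J : Finset ℕ), J ⊆ Finset.Ico (k - τ) k →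
      x (k : ℤ) = xhatD x d k + ∑ h ∈ J, (x ((h : ℤ) + 1) - x (h : ℤ)) →
      ∀ z : PiLp 2 H,
        ⟪f' (xhatD x d k), z - x (k : ℤ)⟫ ≤
          f z - f (x (k : ℤ)) +
            τ * Lres / 2 * ∑ h ∈ J, ‖x (h : ℤ) - x ((h : ℤ) + 1)‖ ^ 2 := by
  intro k J hJsub hxk z
  classical
  set y := xhatD x d k with hy
  set Δ : ℕ → PiLp 2 H := fun h => x ((h : ℤ) + 1) - x (h : ℤ) with hΔdef
  have hL : (0:ℝ) ≤ Lres := hLres_pos.le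
  have hsupp : ∀ h ∈ J, ∃ i : Fin m, ∀ j, j ≠ i → Δ h j = 0 := by
    intro h _
    refine ⟨idx h, fun j hj => ?_⟩
    have := hx_agree h j hj
    simp [Δ, this]
  -- descent chain
  have hE := descent_chain f f' Lres hf_grad hL hf_lip_res y Δ J hsupp
  rw [← hxk] at hE
  have hsum_eq : (∑ h ∈ J, Δ h) = x (k : ℤ) - y := by
    rw [hxk]; abel
  rw [hsum_eq] at hE
  -- convexity
  have hB := convex_grad_ineq f f' hf_grad hf_convex y z
  -- inner product decomposition
  have hdec : ⟪f' y, z - x (k : ℤ)⟫ = ⟪f' y, z - y⟫ - ⟪f' y, x (k : ℤ) - y⟫ := by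
    rw [← inner_sub_right]
    congr 1
    abel
  -- cardinality and Cauchy-Schwarz
  have hcard : (J.card : ℝ) ≤ (τ : ℝ) := by
    have h1 : J.card ≤ (Finset.Ico (k - τ) k).card := Finset.card_le_card hJsub
    rw [Nat.card_Ico] at h1
    have h2 : k - (k - τ) ≤ τ := by omega
    exact_mod_cast h1.trans h2
  have hCS : (∑ h ∈ J, ‖Δ h‖) ^ 2 ≤ (J.card : ℝ) * ∑ h ∈ J, ‖Δ h‖ ^ 2 :=
    sq_sum_le_card_mul_sum_sq
  have hsum_nonneg : (0:ℝ) ≤ ∑ h ∈ J, ‖Δ h‖ ^ 2 :=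
    Finset.sum_nonneg fun h _ => by positivity
  have hnorm_eq : ∀ h ∈ J, ‖x (h : ℤ) - x ((h : ℤ) + 1)‖ ^ 2 = ‖Δ h‖ ^ 2 := by
    intro h _
    rw [show Δ h = x ((h : ℤ) + 1) - x (h : ℤ) from rfl, norm_sub_rev]
  rw [Finset.sum_congr rfl hnorm_eq]
  have hbound : Lres / 2 * (∑ h ∈ J, ‖Δ h‖) ^ 2 ≤
      (τ : ℝ) * Lres / 2 * ∑ h ∈ J, ‖Δ h‖ ^ 2 := by
    have h1 : Lres / 2 * (∑ h ∈ J, ‖Δ h‖) ^ 2 ≤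
        Lres / 2 * ((J.card : ℝ) * ∑ h ∈ J, ‖Δ h‖ ^ 2) := by
      apply mul_le_mul_of_nonneg_left hCS (by positivity)
    have h2 : Lres / 2 * ((J.card : ℝ) * ∑ h ∈ J, ‖Δ h‖ ^ 2) ≤
        Lres / 2 * ((τ : ℝ) * ∑ h ∈ J, ‖Δ h‖ ^ 2) := by
      apply mul_le_mul_of_nonneg_left _ (by positivity)
      exact mul_le_mul_of_nonneg_right hcard hsum_nonneg
    calc Lres / 2 * (∑ h ∈ J, ‖Δ h‖) ^ 2 ≤
        Lres / 2 * ((τ : ℝ) * ∑ h ∈ J, ‖Δ h‖ ^ 2) := h1.trans h2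
      _ = (τ : ℝ) * Lres / 2 * ∑ h ∈ J, ‖Δ h‖ ^ 2 := by ring
  rw [hdec]
  linarith
end
end

section
/- Assume δ < 2. Then there exists a sequence (v^k)_{k∈ℕ} of H-valued random variables such that, P-almost surely: (i) for every k ∈ ℕ, v^k is a subgradient of F at x̄^{k+1}, i.e. F(z) ≥ F(x̄^{k+1}) + ⟨v^k, z − x̄^{k+1}⟩ for every z ∈ H; and (ii) v^k → 0 and x^k − x̄^{k+1} → 0 strongly in H as k → ∞. -/
open MeasureTheory ProbabilityTheory Filter Topology Set
open scoped BigOperators RealInnerProductSpace ENNReal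

noncomputable section

set_option synthInstance.maxHeartbeats 400000
set_option maxHeartbeats 1000000

variable {m : ℕ} {H : Fin m → Type*}
  [∀ i, NormedAddCommGroup (H i)] [∀ i, InnerProductSpace ℝ (H i)]

section Aux

/-- 1D: convex function with derivative at 0. -/
lemma oneD_convex_deriv_le {φ : ℝ → ℝ} (hφ : ConvexOn ℝ Set.univ φ) {d : ℝ}
    (hd : HasDerivAt φ d 0) : φ 0 + d ≤ φ 1 := by
  have key : ∀ t ∈ Set.Ioo (0:ℝ) 1, (φ t - φ 0) / (t - 0) ≤ φ 1 - φ 0 := by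
    intro t ht
    have h1 := hφ.slope_mono_adjacent (Set.mem_univ (0:ℝ)) (Set.mem_univ (1:ℝ)) ht.1 ht.2
    have ht0 : (0:ℝ) < t := ht.1
    have ht1 : (0:ℝ) < 1 - t := by linarith [ht.2]
    rw [show t - (0:ℝ) = t by ring] at h1 ⊢
    rw [div_le_div_iff₀ ht0 ht1] at h1
    rw [div_le_iff₀ ht0]
    nlinarith
  have htend : Tendsto (slope φ 0) (𝓝[>] (0:ℝ)) (𝓝 d) :=
    ((hasDerivAt_iff_tendsto_slope).mp hd).mono_left
      (nhdsWithin_mono _ (fun x hx => ne_of_gt hx))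
  have hle : d ≤ φ 1 - φ 0 := by
    refine le_of_tendsto htend ?_
    filter_upwards [Ioo_mem_nhdsGT_of_mem (by constructor <;> norm_num : (0:ℝ) ∈ Set.Ico 0 1)]
      with t ht
    rw [slope_def_field]
    exact key t ht
  linarith

/-- 1D quadratic upper bound from a linear bound on the derivative. -/
lemma oneD_quad_upper {φ φd : ℝ → ℝ} (hd : ∀ t, HasDerivAt φ (φd t) t) {K : ℝ}
    (hlip : ∀ t ∈ Set.Icc (0:ℝ) 1, φd t ≤ φd 0 + K * t) :
    φ 1 ≤ φ 0 + φd 0 + K / 2 := by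
  set h : ℝ → ℝ := fun t => φ 0 + t * φd 0 + K * t ^ 2 / 2 - φ t with hh
  have hder : ∀ t, HasDerivAt h (φd 0 + K * t - φd t) t := by
    intro t
    have h1 : HasDerivAt (fun t : ℝ => φ 0 + t * φd 0 + K * t ^ 2 / 2 - φ t)
        (0 + (1 * φd 0) + K * (2 * t ^ 1) / 2 - φd t) t := by
      exact (((hasDerivAt_const t (φ 0)).add ((hasDerivAt_id t).mul_const (φd 0))).add
        (((hasDerivAt_pow 2 t).const_mul K).div_const 2)).sub (hd t)
    convert h1 using 1
    ring
  have hmono : MonotoneOn h (Set.Icc (0:ℝ) 1) := by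
    apply monotoneOn_of_deriv_nonneg (convex_Icc 0 1)
    · refine Continuous.continuousOn ?_
      have : Differentiable ℝ h := fun t => (hder t).differentiableAt
      exact this.continuous
    · intro t ht
      exact (hder t).differentiableAt.differentiableWithinAt
    · intro t ht
      rw [(hder t).deriv]
      have ht' : t ∈ Set.Icc (0:ℝ) 1 := Set.mem_Icc_of_Ioo (by rwa [interior_Icc] at ht)
      have := hlip t ht'
      linarith
  have h01 : h 0 ≤ h 1 := hmono (by norm_num) (by norm_num) (by norm_num)
  simp only [hh] at h01
  nlinarith [h01]

variable {E : Type*} [NormedAddCommGroup E] [InnerProductSpace ℝ E]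

/-- Gradient inequality for convex functions. -/
lemma convex_gradient_ineq [CompleteSpace E] {f : E → ℝ} (hf : ConvexOn ℝ Set.univ f)
    {x z gx : E} (hg : HasGradientAt f gx x) :
    f x + ⟪gx, z - x⟫ ≤ f z := by
  set c : ℝ → E := fun t => x + t • (z - x) with hc
  have hcd : HasDerivAt c (z - x) 0 := by
    rw [hc]; simpa using ((hasDerivAt_id (0:ℝ)).smul_const (z - x)).const_add x
  have hc0 : c 0 = x := by simp [hc]
  have hφd : HasDerivAt (fun t => f (c t)) ⟪gx, z - x⟫ 0 := by
    have h2 : HasFDerivAt f ((InnerProductSpace.toDual ℝ E) gx) (c 0) := by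
      rw [hc0]; exact hg.hasFDerivAt
    have h3 := h2.comp_hasDerivAt 0 hcd
    simpa [InnerProductSpace.toDual_apply_apply, Function.comp_def] using h3
  have hconv : ConvexOn ℝ Set.univ (fun t => f (c t)) := by
    have haff : ConvexOn ℝ ((AffineMap.lineMap x z : ℝ →ᵃ[ℝ] E) ⁻¹' Set.univ)
        (f ∘ (AffineMap.lineMap x z : ℝ →ᵃ[ℝ] E)) := hf.comp_affineMap _
    have : (fun t => f (c t)) = f ∘ (AffineMap.lineMap x z : ℝ →ᵃ[ℝ] E) := by
      funext t
      simp only [hc, AffineMap.lineMap_apply, Function.comp, vsub_eq_sub, vadd_eq_add]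
      rw [add_comm]
    rw [this]
    simpa using haff
  have := oneD_convex_deriv_le hconv hφd
  have hc1 : c 1 = z := by simp [hc]
  rw [hc0, hc1] at this
  exact this

end Aux
section PiLpAux

lemma normsq_piLp (x : PiLp 2 H) : ‖x‖ ^ 2 = ∑ i, ‖x i‖ ^ 2 := by
  rw [← real_inner_self_eq_norm_sq, PiLp.inner_apply]
  exact Finset.sum_congr rfl fun i _ => real_inner_self_eq_norm_sq _

lemma norm_coord_le (x : PiLp 2 H) (i : Fin m) : ‖x i‖ ≤ ‖x‖ := by
  have h := normsq_piLp x
  have h2 : ‖x i‖ ^ 2 ≤ ‖x‖ ^ 2 := by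
    rw [h]
    exact Finset.single_le_sum (f := fun j => ‖x j‖ ^ 2)
      (fun j _ => sq_nonneg _) (Finset.mem_univ i)
  nlinarith [norm_nonneg (x i), norm_nonneg x]

lemma sub_coord (x y : PiLp 2 H) (j : Fin m) : (x - y) j = x j - y j := rfl

lemma upd_coord_same (x : PiLp 2 H) (i : Fin m) (u : H i) : upd x i u i = u :=
  Function.update_self i u x

lemma upd_coord_ne (x : PiLp 2 H) (i : Fin m) (u : H i) {j : Fin m} (hj : j ≠ i) :
    upd x i u j = x j := Function.update_of_ne hj u x

lemma upd_self (x : PiLp 2 H) (i : Fin m) : upd x i (x i) = x :=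
  (congrArg (WithLp.toLp 2) (Function.update_eq_self i x.ofLp) :)

lemma inner_upd_sub (w x : PiLp 2 H) (i : Fin m) (u : H i) :
    ⟪w, upd x i u - x⟫ = ⟪w i, u - x i⟫ := by
  rw [PiLp.inner_apply]
  rw [Finset.sum_eq_single i]
  · rw [sub_coord, upd_coord_same]
  · intro j _ hj
    rw [sub_coord, upd_coord_ne x i u hj, sub_self, inner_zero_right]
  · intro h; exact absurd (Finset.mem_univ i) h

lemma normsq_upd_sub (x : PiLp 2 H) (i : Fin m) (u : H i) :
    ‖upd x i u - x‖ ^ 2 = ‖u - x i‖ ^ 2 := by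
  rw [normsq_piLp, Finset.sum_eq_single i]
  · rw [sub_coord, upd_coord_same]
  · intro j _ hj
    rw [sub_coord, upd_coord_ne x i u hj, sub_self, norm_zero]
    norm_num
  · intro h; exact absurd (Finset.mem_univ i) h

lemma norm_upd_sub (x : PiLp 2 H) (i : Fin m) (u : H i) :
    ‖upd x i u - x‖ = ‖u - x i‖ := by
  have := normsq_upd_sub x i u
  have h1 : (0:ℝ) ≤ ‖upd x i u - x‖ := norm_nonneg _
  have h2 : (0:ℝ) ≤ ‖u - x i‖ := norm_nonneg _
  nlinarith

lemma sum_norm_upd_sub (x : PiLp 2 H) (i : Fin m) (u : H i) :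
    ∑ j, ‖(upd x i u) j - x j‖ = ‖u - x i‖ := by
  rw [Finset.sum_eq_single i]
  · rw [upd_coord_same]
  · intro j _ hj
    rw [upd_coord_ne x i u hj, sub_self, norm_zero]
  · intro h; exact absurd (Finset.mem_univ i) h

/-- Block descent lemma. -/
lemma block_descent [∀ i, CompleteSpace (H i)] (f : PiLp 2 H → ℝ) (f' : PiLp 2 H → PiLp 2 H)
    (hf_grad : ∀ z, HasGradientAt f (f' z) z) (x : PiLp 2 H) (i : Fin m) {Li : ℝ}
    (hlip : ∀ u u' : H i, ‖f' (upd x i u) i - f' (upd x i u') i‖ ≤ Li * ‖u - u'‖)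
    (u : H i) :
    f (upd x i u) ≤ f x + ⟪f' x i, u - x i⟫ + Li / 2 * ‖u - x i‖ ^ 2 := by
  set Δ : H i := u - x i with hΔ
  set w : PiLp 2 H := upd x i u - x with hw
  set c : ℝ → PiLp 2 H := fun t => x + t • w with hc
  have hct : ∀ t : ℝ, c t = upd x i (x i + t • Δ) := by
    intro t
    ext j
    by_cases hj : j = i
    · subst hj
      show x j + t • (w j) = _
      rw [upd_coord_same, hw, sub_coord, upd_coord_same]
    · show x j + t • (w j) = _
      rw [upd_coord_ne x i _ hj, hw, sub_coord, upd_coord_ne x i u hj, sub_self, smul_zero,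
        add_zero]
  have hc0 : c 0 = x := by simp [hc]
  have hc1 : c 1 = upd x i u := by simp [hc, hw]
  have hinner : ∀ z : PiLp 2 H, ⟪f' z, w⟫ = ⟪f' z i, Δ⟫ := by
    intro z
    rw [hw, inner_upd_sub]
  have hφd : ∀ t : ℝ, HasDerivAt (fun s => f (c s)) ⟪f' (c t) i, Δ⟫ t := by
    intro t
    have hcd : HasDerivAt c w t := by
      rw [hc]; simpa using ((hasDerivAt_id t).smul_const w).const_add x
    have h2 : HasFDerivAt f ((InnerProductSpace.toDual ℝ _) (f' (c t))) (c t) :=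
      (hf_grad (c t)).hasFDerivAt
    have h3 := h2.comp_hasDerivAt t hcd
    have : (InnerProductSpace.toDual ℝ _) (f' (c t)) w = ⟪f' (c t) i, Δ⟫ := by
      rw [InnerProductSpace.toDual_apply_apply]; exact hinner _
    rw [← this]
    exact h3
  have hquad := oneD_quad_upper (φ := fun s => f (c s)) (φd := fun t => ⟪f' (c t) i, Δ⟫)
    hφd (K := Li * ‖Δ‖ ^ 2) ?_
  · rw [hc0, hc1] at hquad
    calc f (upd x i u) ≤ f x + ⟪f' x i, Δ⟫ + Li * ‖Δ‖ ^ 2 / 2 := hquad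
    _ = f x + ⟪f' x i, Δ⟫ + Li / 2 * ‖Δ‖ ^ 2 := by ring
  · intro t ht
    have key : ⟪f' (c t) i, Δ⟫ - ⟪f' (c 0) i, Δ⟫ ≤ (Li * ‖Δ‖ ^ 2) * t := by
      rw [← inner_sub_left]
      calc ⟪f' (c t) i - f' (c 0) i, Δ⟫ ≤ ‖f' (c t) i - f' (c 0) i‖ * ‖Δ‖ :=
            real_inner_le_norm _ _
      _ ≤ (Li * ‖x i + t • Δ - (x i + (0:ℝ) • Δ)‖) * ‖Δ‖ := by
            apply mul_le_mul_of_nonneg_right _ (norm_nonneg _)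
            have := hlip (x i + t • Δ) (x i + (0:ℝ) • Δ)
            rw [hct t, hct 0] at *
            convert this using 3 <;> abel
      _ = (Li * ‖Δ‖ ^ 2) * t := by
            have : x i + t • Δ - (x i + (0:ℝ) • Δ) = t • Δ := by
              rw [zero_smul, add_zero]; abel
            rw [this, norm_smul, Real.norm_eq_abs, abs_of_nonneg ht.1]
            ring
    linarith
end PiLpAux

section ProxAux

/-- Subgradient inequality at the prox point. -/
lemma prox_subgrad {E : Type*} [NormedAddCommGroup E] [InnerProductSpace ℝ E]
    {c : ℝ} (hc : 0 < c) {gi : E → ℝ} (hgi : ConvexOn ℝ Set.univ gi)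
    {v pt : E} (hp : IsProx c gi v pt) (z : E) :
    gi pt + (1 / c) * ⟪v - pt, z - pt⟫ ≤ gi z := by
  set a : ℝ := 1 / (2 * c) with ha
  have ha0 : 0 < a := by positivity
  have key : ∀ t : ℝ, 0 < t → t ≤ 1 →
      gi pt + (1 / c) * ⟪v - pt, z - pt⟫ ≤ gi z + a * t * ‖z - pt‖ ^ 2 := by
    intro t ht0 ht1
    have hmin := hp.1 (pt + t • (z - pt))
    have hconv : gi (pt + t • (z - pt)) ≤ (1 - t) * gi pt + t * gi z := by
      have := hgi.2 (Set.mem_univ pt) (Set.mem_univ z) (by linarith : (0:ℝ) ≤ 1 - t)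
        (le_of_lt ht0) (by ring)
      calc gi (pt + t • (z - pt)) = gi ((1 - t) • pt + t • z) := by
            congr 1
            rw [sub_smul, one_smul, smul_sub]
            abel
      _ ≤ (1 - t) * gi pt + t * gi z := by simpa [smul_eq_mul] using this
    have hnorm : ‖pt + t • (z - pt) - v‖ ^ 2
        = ‖pt - v‖ ^ 2 + 2 * t * ⟪pt - v, z - pt⟫ + t ^ 2 * ‖z - pt‖ ^ 2 := by
      have : pt + t • (z - pt) - v = (pt - v) + t • (z - pt) := by abel
      rw [this, norm_add_sq_real, real_inner_smul_right, norm_smul, Real.norm_eq_abs,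
        mul_pow, sq_abs]
      ring
    rw [hnorm] at hmin
    have hinner : ⟪v - pt, z - pt⟫ = - ⟪pt - v, z - pt⟫ := by
      rw [← inner_neg_left]; congr 1; abel
    have hca : 1 / c = 2 * a := by rw [ha]; field_simp
    rw [hinner, hca]
    nlinarith [hmin, hconv]
  refine le_of_forall_pos_le_add ?_
  intro ε hε
  set t : ℝ := min 1 (ε / (a * ‖z - pt‖ ^ 2 + 1)) with htdef
  have hpos : 0 < a * ‖z - pt‖ ^ 2 + 1 := by positivity
  have ht0 : 0 < t := lt_min one_pos (by positivity)
  have ht1 : t ≤ 1 := min_le_left _ _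
  have := key t ht0 ht1
  have hbound : a * t * ‖z - pt‖ ^ 2 ≤ ε := by
    have ht2 : t ≤ ε / (a * ‖z - pt‖ ^ 2 + 1) := min_le_right _ _
    have h3 : a * ‖z - pt‖ ^ 2 ≥ 0 := by positivity
    calc a * t * ‖z - pt‖ ^ 2 = t * (a * ‖z - pt‖ ^ 2) := by ring
    _ ≤ (ε / (a * ‖z - pt‖ ^ 2 + 1)) * (a * ‖z - pt‖ ^ 2 + 1) := by
        apply mul_le_mul ht2 (by linarith) h3 (by positivity)
    _ = ε := div_mul_cancel₀ ε (ne_of_gt hpos)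
  linarith

end ProxAux

section GradDiff

/-- Coordinate-path Lipschitz bound for the full gradient. -/
lemma grad_diff_le (f' : PiLp 2 H → PiLp 2 H) {Lres : ℝ}
    (hlip : ∀ (z : PiLp 2 H) (i : Fin m) (u u' : H i),
      ‖f' (upd z i u) - f' (upd z i u')‖ ≤ Lres * ‖u - u'‖)
    (s : Finset (Fin m)) : ∀ a b : PiLp 2 H, (∀ j ∉ s, a j = b j) →
      ‖f' a - f' b‖ ≤ Lres * ∑ i ∈ s, ‖a i - b i‖ := by
  induction s using Finset.induction_on with
  | empty =>
    intro a b hab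
    have : a = b := PiLp.ext fun j => hab j (Finset.notMem_empty j)
    simp [this]
  | @insert i s hi IH =>
    intro a b hab
    set a' : PiLp 2 H := upd a i (b i) with ha'
    have h1 : ‖f' a - f' a'‖ ≤ Lres * ‖a i - b i‖ := by
      have := hlip a i (a i) (b i)
      rwa [upd_self] at this
    have h2 : ‖f' a' - f' b‖ ≤ Lres * ∑ j ∈ s, ‖a' j - b j‖ := by
      apply IH
      intro j hj
      by_cases hji : j = i
      · subst hji; rw [ha', upd_coord_same]
      · rw [ha', upd_coord_ne a i _ hji]
        exact hab j (by simp [hji, hj])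
    have h3 : ∑ j ∈ s, ‖a' j - b j‖ = ∑ j ∈ s, ‖a j - b j‖ := by
      apply Finset.sum_congr rfl
      intro j hj
      rw [ha', upd_coord_ne a i _ (fun h => hi (h ▸ hj))]
    rw [Finset.sum_insert hi, mul_add]
    calc ‖f' a - f' b‖ ≤ ‖f' a - f' a'‖ + ‖f' a' - f' b‖ := norm_sub_le_norm_sub_add_norm_sub _ _ _
    _ ≤ Lres * ‖a i - b i‖ + Lres * ∑ j ∈ s, ‖a j - b j‖ := by rw [← h3]; exact add_le_add h1 h2
    _ = _ := rfl

end GradDiff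
section StepIneq

/-- One-block step inequality. -/
lemma step_ineq [∀ i, CompleteSpace (H i)]
    (f : PiLp 2 H → ℝ) (f' : PiLp 2 H → PiLp 2 H)
    (hf_grad : ∀ z, HasGradientAt f (f' z) z)
    (g : ∀ i, H i → ℝ) (hg_convex : ∀ i, ConvexOn ℝ Set.univ (g i))
    (γ : Fin m → ℝ) (hγ_pos : ∀ i, 0 < γ i) (L : Fin m → ℝ)
    (x xh : PiLp 2 H) (i : Fin m) (xb : H i)
    (hlip : ∀ u u' : H i, ‖f' (upd x i u) i - f' (upd x i u') i‖ ≤ L i * ‖u - u'‖)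
    (hprox : IsProx (γ i) (g i) (x i - γ i • f' xh i) xb) :
    Fobj f g (upd x i xb) ≤ Fobj f g x - (1 / γ i - L i / 2) * ‖xb - x i‖ ^ 2
      + ⟪f' x i - f' xh i, xb - x i⟫ := by
  set Δ : H i := xb - x i with hΔ
  have hdesc : f (upd x i xb) ≤ f x + ⟪f' x i, Δ⟫ + L i / 2 * ‖Δ‖ ^ 2 :=
    block_descent f f' hf_grad x i hlip xb
  have hgi : g i xb ≤ g i (x i) - (1 / γ i) * ‖Δ‖ ^ 2 - ⟪f' xh i, Δ⟫ := by
    have hsub := prox_subgrad (hγ_pos i) (hg_convex i) hprox (x i)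
    have hv : (x i - γ i • f' xh i) - xb = -Δ - γ i • f' xh i := by
      rw [hΔ]; abel
    have hz : x i - xb = -Δ := by rw [hΔ]; abel
    rw [hv, hz] at hsub
    have hinner : ⟪-Δ - γ i • f' xh i, -Δ⟫ = ‖Δ‖ ^ 2 + γ i * ⟪f' xh i, Δ⟫ := by
      rw [inner_sub_left, inner_neg_neg, real_inner_self_eq_norm_sq, inner_neg_right,
        real_inner_smul_left]
      ring
    rw [hinner] at hsub
    have hγ0 : γ i ≠ 0 := ne_of_gt (hγ_pos i)
    have hγ : (1 / γ i) * (‖Δ‖ ^ 2 + γ i * ⟪f' xh i, Δ⟫)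
        = (1 / γ i) * ‖Δ‖ ^ 2 + ⟪f' xh i, Δ⟫ := by
      field_simp
    linarith [hsub, hγ.symm.le]
  have hgsum : ∑ j, g j ((upd x i xb) j) - ∑ j, g j (x j) = g i xb - g i (x i) := by
    rw [← Finset.sum_sub_distrib]
    rw [Finset.sum_eq_single i]
    · rw [upd_coord_same]
    · intro j _ hj
      rw [upd_coord_ne x i xb hj, sub_self]
    · intro h; exact absurd (Finset.mem_univ i) h
  have hFdiff : Fobj f g (upd x i xb) - Fobj f g x
      = (f (upd x i xb) - f x) + (g i xb - g i (x i)) := by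
    rw [Fobj, Fobj, ← hgsum]; ring
  have hinners : ⟪f' x i, Δ⟫ - ⟪f' xh i, Δ⟫ = ⟪f' x i - f' xh i, Δ⟫ := by
    rw [inner_sub_left]
  linarith [hdesc, hgi, hFdiff, hinners.le, hinners.ge]

end StepIneq

section Trajectory

/-- Sum of coordinate norms of a single-coordinate step. -/
lemma sum_coord_norm_step (y : ℤ → PiLp 2 H) (hy0 : ∀ n : ℤ, n ≤ 0 → y n = y 0)
    (hstep : ∀ n : ℕ, ∃ (i : Fin m) (u : H i), y ((n:ℤ) + 1) = upd (y (n:ℤ)) i u) (h : ℤ) :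
    ∑ j, ‖y (h+1) j - y h j‖ ≤ ‖y (h+1) - y h‖ := by
  rcases lt_or_ge h 0 with hneg | hpos
  · have h1 : y (h+1) = y 0 := hy0 _ (by omega)
    have h2 : y h = y 0 := hy0 _ (by omega)
    rw [h1, h2]
    simp
  · obtain ⟨n, rfl⟩ : ∃ n : ℕ, h = (n : ℤ) := ⟨h.toNat, (Int.toNat_of_nonneg hpos).symm⟩
    obtain ⟨i, u, hu⟩ := hstep n
    rw [hu, norm_upd_sub]
    rw [(sum_norm_upd_sub (y (n:ℤ)) i u)]

/-- Coordinatewise distance between current and delayed iterates. -/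
lemma xhat_coord_bound (y : ℤ → PiLp 2 H) (hy0 : ∀ n : ℤ, n ≤ 0 → y n = y 0)
    (hstep : ∀ n : ℕ, ∃ (i : Fin m) (u : H i), y ((n:ℤ) + 1) = upd (y (n:ℤ)) i u)
    (τ : ℕ) (d : ℕ → Fin m → ℕ) (hd : ∀ k j, d k j ≤ min k τ) (k : ℕ) :
    ∑ j, ‖y (k:ℤ) j - xhatD y d k j‖
      ≤ ∑ t ∈ Finset.range τ, ‖y ((k:ℤ) - τ + t + 1) - y ((k:ℤ) - τ + t)‖ := by
  have key : ∀ j : Fin m, ‖y (k:ℤ) j - xhatD y d k j‖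
      ≤ ∑ t ∈ Finset.range τ, ‖y ((k:ℤ) - τ + t + 1) j - y ((k:ℤ) - τ + t) j‖ := by
    intro j
    set G : ℕ → H j := fun t => y (max ((k:ℤ) - d k j) ((k:ℤ) - τ + t)) j with hG
    have htele : y (k:ℤ) j - xhatD y d k j = ∑ t ∈ Finset.range τ, (G (t+1) - G t) := by
      rw [Finset.sum_range_sub G]
      have hGτ : G τ = y (k:ℤ) j := by
        have hidx : max ((k:ℤ) - d k j) ((k:ℤ) - τ + τ) = (k:ℤ) := by
          rw [max_eq_right (by omega : (k:ℤ) - d k j ≤ (k:ℤ) - τ + τ)]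
          omega
        rw [hG]; simp only [hidx]
      have hG0 : G 0 = xhatD y d k j := by
        have h1 : d k j ≤ τ := le_trans (hd k j) (min_le_right _ _)
        have hidx : max ((k:ℤ) - d k j) ((k:ℤ) - τ + (0:ℕ)) = (k:ℤ) - d k j := by
          rw [max_eq_left (by push_cast; omega : (k:ℤ) - τ + ((0:ℕ):ℤ) ≤ (k:ℤ) - d k j)]
        rw [hG]; simp only [hidx]; rfl
      rw [hGτ, hG0]
    have hterm : ∀ t ∈ Finset.range τ, ‖G (t+1) - G t‖
        ≤ ‖y ((k:ℤ) - τ + t + 1) j - y ((k:ℤ) - τ + t) j‖ := by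
      intro t ht
      rcases le_or_gt ((k:ℤ) - τ + t + 1) ((k:ℤ) - d k j) with hle | hgt
      · have e1 : G (t+1) = y ((k:ℤ) - d k j) j := by
          have hidx : max ((k:ℤ) - d k j) ((k:ℤ) - τ + ((t:ℕ)+1:ℕ)) = (k:ℤ) - d k j := by
            rw [max_eq_left (by push_cast; omega)]
          rw [hG]; simp only [hidx]
        have e2 : G t = y ((k:ℤ) - d k j) j := by
          have hidx : max ((k:ℤ) - d k j) ((k:ℤ) - τ + t) = (k:ℤ) - d k j := by
            rw [max_eq_left (by omega)]
          rw [hG]; simp only [hidx]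
        rw [e1, e2, sub_self, norm_zero]
        positivity
      · have e1 : G (t+1) = y ((k:ℤ) - τ + t + 1) j := by
          have hidx : max ((k:ℤ) - d k j) ((k:ℤ) - τ + ((t:ℕ)+1:ℕ)) = (k:ℤ) - τ + t + 1 := by
            rw [max_eq_right (by push_cast; omega)]
            push_cast; ring
          rw [hG]; simp only [hidx]
        have e2 : G t = y ((k:ℤ) - τ + t) j := by
          have hidx : max ((k:ℤ) - d k j) ((k:ℤ) - τ + t) = (k:ℤ) - τ + t := by
            rw [max_eq_right (by omega)]
          rw [hG]; simp only [hidx]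
        rw [e1, e2]
    calc ‖y (k:ℤ) j - xhatD y d k j‖ = ‖∑ t ∈ Finset.range τ, (G (t+1) - G t)‖ := by rw [htele]
    _ ≤ ∑ t ∈ Finset.range τ, ‖G (t+1) - G t‖ := norm_sum_le _ _
    _ ≤ _ := Finset.sum_le_sum hterm
  calc ∑ j, ‖y (k:ℤ) j - xhatD y d k j‖
      ≤ ∑ j, ∑ t ∈ Finset.range τ, ‖y ((k:ℤ) - τ + t + 1) j - y ((k:ℤ) - τ + t) j‖ :=
        Finset.sum_le_sum fun j _ => key j
  _ = ∑ t ∈ Finset.range τ, ∑ j, ‖y ((k:ℤ) - τ + t + 1) j - y ((k:ℤ) - τ + t) j‖ :=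
        Finset.sum_comm
  _ ≤ ∑ t ∈ Finset.range τ, ‖y ((k:ℤ) - τ + t + 1) - y ((k:ℤ) - τ + t)‖ := by
        apply Finset.sum_le_sum
        intro t _
        have := sum_coord_norm_step y hy0 hstep ((k:ℤ) - τ + t)
        calc ∑ j, ‖y ((k:ℤ) - τ + t + 1) j - y ((k:ℤ) - τ + t) j‖
            = ∑ j, ‖y (((k:ℤ) - τ + t) + 1) j - y ((k:ℤ) - τ + t) j‖ := by norm_num
        _ ≤ ‖y (((k:ℤ) - τ + t) + 1) - y ((k:ℤ) - τ + t)‖ := this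
        _ = _ := by norm_num

end Trajectory
section Prob

variable {Ω : Type*} [MeasurableSpace Ω]

/-- The atom of the first `k` indices. -/
def Aset (idx : ℕ → Ω → Fin m) (k : ℕ) (s : Fin k → Fin m) : Set Ω :=
  ⋂ j : Fin k, (idx (j:ℕ))⁻¹' {s j}

lemma mem_Aset_iff {idx : ℕ → Ω → Fin m} {k : ℕ} {s : Fin k → Fin m} {ω : Ω} :
    ω ∈ Aset idx k s ↔ ∀ j : Fin k, idx (j:ℕ) ω = s j := by
  simp [Aset]

lemma meas_Aset {idx : ℕ → Ω → Fin m} (hidx_meas : ∀ k : ℕ, Measurable (idx k))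
    (k : ℕ) (s : Fin k → Fin m) : MeasurableSet (Aset idx k s) :=
  MeasurableSet.iInter fun j => (hidx_meas j) (measurableSet_singleton (s j))

variable (P : Measure Ω) [IsProbabilityMeasure P]

lemma prob_Aset {idx : ℕ → Ω → Fin m}
    (hidx_iid : iIndepFun idx P)
    {p : Fin m → ℝ}
    (hp_law : ∀ (k : ℕ) (i : Fin m), P {ω | idx k ω = i} = ENNReal.ofReal (p i))
    (k : ℕ) (s : Fin k → Fin m) :
    P (Aset idx k s) = ∏ j : Fin k, ENNReal.ofReal (p (s j)) := by
  classical
  set sets : ℕ → Set (Fin m) := fun n => if h : n < k then {s ⟨n, h⟩} else Set.univ with hsets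
  have hmeas : ∀ n, n ∈ Finset.range k → MeasurableSet (sets n) := by
    intro n _
    by_cases h : n < k <;> simp [hsets, h]
  have hiid := hidx_iid.measure_inter_preimage_eq_mul (Finset.range k) hmeas
  have hA : Aset idx k s = ⋂ n ∈ Finset.range k, idx n ⁻¹' sets n := by
    ext ω
    simp only [Aset, Set.mem_iInter, Set.mem_preimage, Finset.mem_range, hsets,
      Set.mem_singleton_iff]
    constructor
    · intro h n hn
      rw [dif_pos hn]
      exact h ⟨n, hn⟩
    · intro h j
      have := h (j:ℕ) j.isLt
      rwa [dif_pos j.isLt, Set.mem_singleton_iff, Fin.eta] at this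
  have hval : ∀ n ∈ Finset.range k,
      P (idx n ⁻¹' sets n) = (if h : n < k then ENNReal.ofReal (p (s ⟨n, h⟩)) else 1) := by
    intro n hn
    have hn' : n < k := Finset.mem_range.mp hn
    rw [dif_pos hn']
    have : idx n ⁻¹' sets n = {ω | idx n ω = s ⟨n, hn'⟩} := by
      ext ω
      simp [hsets, dif_pos hn', Set.mem_singleton_iff]
    rw [this, hp_law]
  rw [hA, hiid, Finset.prod_congr rfl hval]
  rw [← Fin.prod_univ_eq_prod_range (fun n => if h : n < k then ENNReal.ofReal (p (s ⟨n, h⟩)) else 1) k]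
  apply Finset.prod_congr rfl
  intro j _
  rw [dif_pos j.isLt, Fin.eta]

lemma prob_Aset_inter {idx : ℕ → Ω → Fin m}
    (hidx_iid : iIndepFun idx P)
    {p : Fin m → ℝ}
    (hp_law : ∀ (k : ℕ) (i : Fin m), P {ω | idx k ω = i} = ENNReal.ofReal (p i))
    (k : ℕ) (s : Fin k → Fin m) (i : Fin m) :
    P (Aset idx k s ∩ (idx k)⁻¹' {i})
      = (∏ j : Fin k, ENNReal.ofReal (p (s j))) * ENNReal.ofReal (p i) := by
  classical
  set sets : ℕ → Set (Fin m) := fun n => if h : n < k then {s ⟨n, h⟩} else {i} with hsets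
  have hmeas : ∀ n, n ∈ Finset.range (k+1) → MeasurableSet (sets n) := by
    intro n _
    by_cases h : n < k <;> simp [hsets, h]
  have hiid := hidx_iid.measure_inter_preimage_eq_mul (Finset.range (k+1)) hmeas
  have hA : Aset idx k s ∩ (idx k)⁻¹' {i} = ⋂ n ∈ Finset.range (k+1), idx n ⁻¹' sets n := by
    ext ω
    simp only [Set.mem_inter_iff, Aset, Set.mem_iInter, Set.mem_preimage, Finset.mem_range,
      hsets, Set.mem_singleton_iff]
    constructor
    · rintro ⟨h1, h2⟩ n hn
      by_cases h : n < k
      · rw [dif_pos h]; exact h1 ⟨n, h⟩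
      · have : n = k := by omega
        subst this
        rw [dif_neg h]
        exact h2
    · intro h
      constructor
      · intro j
        have := h (j:ℕ) (by omega)
        rwa [dif_pos j.isLt, Set.mem_singleton_iff, Fin.eta] at this
      · have := h k (by omega)
        rwa [dif_neg (lt_irrefl k), Set.mem_singleton_iff] at this
  have hval : ∀ n ∈ Finset.range (k+1),
      P (idx n ⁻¹' sets n)
        = (if h : n < k then ENNReal.ofReal (p (s ⟨n, h⟩)) else ENNReal.ofReal (p i)) := by
    intro n _
    by_cases h : n < k
    · rw [dif_pos h]
      have : idx n ⁻¹' sets n = {ω | idx n ω = s ⟨n, h⟩} := by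
        ext ω; simp [hsets, dif_pos h, Set.mem_singleton_iff]
      rw [this, hp_law]
    · rw [dif_neg h]
      have : idx n ⁻¹' sets n = {ω | idx n ω = i} := by
        ext ω; simp [hsets, dif_neg h, Set.mem_singleton_iff]
      rw [this, hp_law]
  rw [hA, hiid, Finset.prod_congr rfl hval, Finset.prod_range_succ, dif_neg (lt_irrefl k)]
  congr 1
  rw [← Fin.prod_univ_eq_prod_range
    (fun n => if h : n < k then ENNReal.ofReal (p (s ⟨n, h⟩)) else ENNReal.ofReal (p i)) k]
  apply Finset.prod_congr rfl
  intro j _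
  rw [dif_pos j.isLt, Fin.eta]

end Prob
section Expect

variable {Ω : Type*} [MeasurableSpace Ω] (P : Measure Ω) [IsProbabilityMeasure P]

lemma Aset_nonempty {idx : ℕ → Ω → Fin m}
    (hidx_iid : iIndepFun idx P)
    {p : Fin m → ℝ} (hp_pos : ∀ i, 0 < p i)
    (hp_law : ∀ (k : ℕ) (i : Fin m), P {ω | idx k ω = i} = ENNReal.ofReal (p i))
    (k : ℕ) (s : Fin k → Fin m) : (Aset idx k s).Nonempty := by
  have h := prob_Aset P hidx_iid hp_law k s
  have hne : P (Aset idx k s) ≠ 0 := by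
    rw [h]
    rw [Finset.prod_ne_zero_iff]
    intro j _
    exact ne_of_gt (ENNReal.ofReal_pos.mpr (hp_pos (s j)))
  exact MeasureTheory.nonempty_of_measure_ne_zero hne

/-- A function depending only on the first `k` indices is a finite simple sum of indicators. -/
lemma finitary_repr {idx : ℕ → Ω → Fin m}
    (hidx_iid : iIndepFun idx P)
    {p : Fin m → ℝ} (hp_pos : ∀ i, 0 < p i)
    (hp_law : ∀ (k : ℕ) (i : Fin m), P {ω | idx k ω = i} = ENNReal.ofReal (p i))
    (k : ℕ) (φ : Ω → ℝ)
    (hφ : ∀ ω ω', (∀ j, j < k → idx j ω = idx j ω') → φ ω = φ ω') :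
    φ = fun ω => ∑ s : Fin k → Fin m,
      (Aset idx k s).indicator
        (fun _ => φ (Aset_nonempty P hidx_iid hp_pos hp_law k s).some) ω := by
  classical
  funext ω
  set s₀ : Fin k → Fin m := fun j => idx (j:ℕ) ω with hs₀
  rw [Finset.sum_eq_single s₀]
  · have hmem : ω ∈ Aset idx k s₀ := mem_Aset_iff.mpr fun j => rfl
    rw [Set.indicator_of_mem hmem]
    apply hφ
    intro j hj
    have := mem_Aset_iff.mp (Aset_nonempty P hidx_iid hp_pos hp_law k s₀).some_mem ⟨j, hj⟩
    exact this.symm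
  · intro s _ hs
    have : ω ∉ Aset idx k s := by
      intro hmem
      exact hs (funext fun j => ((mem_Aset_iff.mp hmem) j).symm)
    rw [Set.indicator_of_notMem this]
  · intro h; exact absurd (Finset.mem_univ s₀) h

lemma finitary_integrable {idx : ℕ → Ω → Fin m}
    (hidx_meas : ∀ k : ℕ, Measurable (idx k))
    (hidx_iid : iIndepFun idx P)
    {p : Fin m → ℝ} (hp_pos : ∀ i, 0 < p i)
    (hp_law : ∀ (k : ℕ) (i : Fin m), P {ω | idx k ω = i} = ENNReal.ofReal (p i))
    (k : ℕ) (φ : Ω → ℝ)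
    (hφ : ∀ ω ω', (∀ j, j < k → idx j ω = idx j ω') → φ ω = φ ω') :
    Integrable φ P := by
  rw [finitary_repr P hidx_iid hp_pos hp_law k φ hφ]
  apply integrable_finset_sum
  intro s _
  exact (integrable_const _).indicator (meas_Aset hidx_meas k s)

lemma finitary_measurable {idx : ℕ → Ω → Fin m}
    (hidx_meas : ∀ k : ℕ, Measurable (idx k))
    (hidx_iid : iIndepFun idx P)
    {p : Fin m → ℝ} (hp_pos : ∀ i, 0 < p i)
    (hp_law : ∀ (k : ℕ) (i : Fin m), P {ω | idx k ω = i} = ENNReal.ofReal (p i))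
    (k : ℕ) (φ : Ω → ℝ)
    (hφ : ∀ ω ω', (∀ j, j < k → idx j ω = idx j ω') → φ ω = φ ω') :
    Measurable φ := by
  rw [finitary_repr P hidx_iid hp_pos hp_law k φ hφ]
  apply Finset.measurable_sum
  intro s _
  exact Measurable.indicator measurable_const (meas_Aset hidx_meas k s)

lemma toReal_prob_Aset {idx : ℕ → Ω → Fin m}
    (hidx_iid : iIndepFun idx P)
    {p : Fin m → ℝ} (hp_pos : ∀ i, 0 < p i)
    (hp_law : ∀ (k : ℕ) (i : Fin m), P {ω | idx k ω = i} = ENNReal.ofReal (p i))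
    (k : ℕ) (s : Fin k → Fin m) :
    (P (Aset idx k s)).toReal = ∏ j : Fin k, p (s j) := by
  rw [prob_Aset P hidx_iid hp_law k s, ENNReal.toReal_prod]
  exact Finset.prod_congr rfl fun j _ => ENNReal.toReal_ofReal (le_of_lt (hp_pos (s j)))

/-- Key expectation identity for the freshly sampled coordinate. -/
lemma exp_last_coord {idx : ℕ → Ω → Fin m}
    (hidx_meas : ∀ k : ℕ, Measurable (idx k))
    (hidx_iid : iIndepFun idx P)
    {p : Fin m → ℝ} (hp_pos : ∀ i, 0 < p i)
    (hp_law : ∀ (k : ℕ) (i : Fin m), P {ω | idx k ω = i} = ENNReal.ofReal (p i))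
    (k : ℕ) (Φ : Ω → Fin m → ℝ)
    (hΦ : ∀ ω ω', (∀ j, j < k → idx j ω = idx j ω') → Φ ω = Φ ω') :
    ∫ ω, Φ ω (idx k ω) ∂P = ∫ ω, ∑ i, p i * Φ ω i ∂P := by
  classical
  set rep : (Fin k → Fin m) → Ω := fun s => (Aset_nonempty P hidx_iid hp_pos hp_law k s).some
    with hrep
  set c : (Fin k → Fin m) → Fin m → ℝ := fun s i => Φ (rep s) i with hc
  have hrepΦ : ∀ (s : Fin k → Fin m) (ω : Ω), ω ∈ Aset idx k s → Φ ω = Φ (rep s) := by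
    intro s ω hmem
    apply hΦ
    intro j hj
    rw [mem_Aset_iff.mp hmem ⟨j, hj⟩, mem_Aset_iff.mp ((Aset_nonempty P hidx_iid hp_pos
      hp_law k s).some_mem) ⟨j, hj⟩]
  -- LHS representation
  have hLHS : (fun ω => Φ ω (idx k ω)) = fun ω => ∑ s : Fin k → Fin m, ∑ i : Fin m,
      (Aset idx k s ∩ (idx k)⁻¹' {i}).indicator (fun _ => c s i) ω := by
    funext ω
    set s₀ : Fin k → Fin m := fun j => idx (j:ℕ) ω with hs₀
    rw [Finset.sum_eq_single s₀]
    · rw [Finset.sum_eq_single (idx k ω)]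
      · have hmem : ω ∈ Aset idx k s₀ ∩ (idx k)⁻¹' {idx k ω} := by
          refine ⟨mem_Aset_iff.mpr fun j => rfl, rfl⟩
        rw [Set.indicator_of_mem hmem]
        exact congrFun (hrepΦ s₀ ω (mem_Aset_iff.mpr fun j => rfl)) (idx k ω)
      · intro i _ hi
        have : ω ∉ Aset idx k s₀ ∩ (idx k)⁻¹' {i} := by
          rintro ⟨-, h2⟩
          exact hi (Set.mem_singleton_iff.mp h2).symm
        rw [Set.indicator_of_notMem this]
      · intro h; exact absurd (Finset.mem_univ _) h
    · intro s _ hs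
      apply Finset.sum_eq_zero
      intro i _
      have : ω ∉ Aset idx k s ∩ (idx k)⁻¹' {i} := by
        rintro ⟨h1, -⟩
        exact hs (funext fun j => ((mem_Aset_iff.mp h1) j).symm)
      rw [Set.indicator_of_notMem this]
    · intro h; exact absurd (Finset.mem_univ s₀) h
  -- RHS representation
  have hRHS : (fun ω => ∑ i, p i * Φ ω i) = fun ω => ∑ s : Fin k → Fin m,
      (Aset idx k s).indicator (fun _ => ∑ i, p i * c s i) ω := by
    funext ω
    set s₀ : Fin k → Fin m := fun j => idx (j:ℕ) ω with hs₀
    rw [Finset.sum_eq_single s₀]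
    · have hmem : ω ∈ Aset idx k s₀ := mem_Aset_iff.mpr fun j => rfl
      rw [Set.indicator_of_mem hmem]
      rw [hrepΦ s₀ ω hmem]
    · intro s _ hs
      have : ω ∉ Aset idx k s := by
        intro hmem
        exact hs (funext fun j => ((mem_Aset_iff.mp hmem) j).symm)
      rw [Set.indicator_of_notMem this]
    · intro h; exact absurd (Finset.mem_univ s₀) h
  rw [hLHS, hRHS]
  rw [integral_finset_sum _ (fun s _ => integrable_finset_sum _ (fun i _ =>
    (integrable_const _).indicator ((meas_Aset hidx_meas k s).inter
      ((hidx_meas k) (measurableSet_singleton i)))))]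
  rw [integral_finset_sum _ (fun s _ =>
    (integrable_const _).indicator (meas_Aset hidx_meas k s))]
  apply Finset.sum_congr rfl
  intro s _
  rw [integral_finset_sum _ (fun i _ =>
    (integrable_const _).indicator ((meas_Aset hidx_meas k s).inter
      ((hidx_meas k) (measurableSet_singleton i))))]
  rw [integral_indicator_const _ (meas_Aset hidx_meas k s)]
  have hsum : ∀ i : Fin m, ∫ ω, (Aset idx k s ∩ (idx k)⁻¹' {i}).indicator
      (fun _ => c s i) ω ∂P = ((∏ j : Fin k, p (s j)) * p i) * c s i := by
    intro i
    rw [integral_indicator_const _ ((meas_Aset hidx_meas k s).inter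
      ((hidx_meas k) (measurableSet_singleton i)))]
    rw [measureReal_def, prob_Aset_inter P hidx_iid hp_law k s i]
    rw [smul_eq_mul, ENNReal.toReal_mul, ENNReal.toReal_prod]
    congr 2
    · exact Finset.prod_congr rfl fun j _ => ENNReal.toReal_ofReal (le_of_lt (hp_pos (s j)))
    · exact ENNReal.toReal_ofReal (le_of_lt (hp_pos i))
  rw [Finset.sum_congr rfl (fun i _ => hsum i)]
  rw [smul_eq_mul, measureReal_def, toReal_prob_Aset P hidx_iid hp_pos hp_law k s, Finset.mul_sum]
  apply Finset.sum_congr rfl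
  intro i _
  ring

end Expect
section Star

/-- The central one-step weighted descent inequality. -/
lemma star_ineq [∀ i, CompleteSpace (H i)]
    (f : PiLp 2 H → ℝ) (f' : PiLp 2 H → PiLp 2 H)
    (hf_grad : ∀ z, HasGradientAt f (f' z) z)
    (g : ∀ i, H i → ℝ) (hg_convex : ∀ i, ConvexOn ℝ Set.univ (g i))
    (γ : Fin m → ℝ) (hγ_pos : ∀ i, 0 < γ i) (L : Fin m → ℝ)
    (p : Fin m → ℝ) (hp_pos : ∀ i, 0 < p i) (hpsum : ∑ i, p i = 1)
    {pmin pmax : ℝ} (hpmin_pos : 0 < pmin)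
    (hple : ∀ i, pmin ≤ p i) (hpge : ∀ i, p i ≤ pmax)
    {Lres : ℝ} (hLres_pos : 0 < Lres)
    {a : ℝ} (ha : ∀ i, a ≤ 1 / γ i - L i / 2)
    (τ : ℕ) (σ : ℕ → ℝ) (hσ : ∀ t, 0 ≤ σ t)
    (xk xh xb : PiLp 2 H)
    (hlipk : ∀ (i : Fin m) (u u' : H i), ‖f' (upd xk i u) i - f' (upd xk i u') i‖ ≤ L i * ‖u - u'‖)
    (hprox : ∀ i, IsProx (γ i) (g i) (xk i - γ i • f' xh i) (xb i))
    (hgrad : ‖f' xk - f' xh‖ ≤ Lres * ∑ t ∈ Finset.range τ, σ t) :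
    ∑ i, p i * Fobj f g (upd xk i (xb i))
      ≤ Fobj f g xk
        - (a - (Lres * pmax / (2 * Real.sqrt pmin)) * τ)
            * (∑ i, p i * ‖xb i - xk i‖ ^ 2)
        + (Lres * pmax / (2 * Real.sqrt pmin)) * ∑ t ∈ Finset.range τ, σ t ^ 2 := by
  classical
  have hmne : Nonempty (Fin m) := by
    by_contra hne
    rw [not_nonempty_iff] at hne
    rw [Finset.univ_eq_empty, Finset.sum_empty] at hpsum
    exact one_ne_zero hpsum.symm
  set spm : ℝ := Real.sqrt pmin with hspmdef
  have hspm : 0 < spm := Real.sqrt_pos.mpr hpmin_pos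
  have hspm2 : spm ^ 2 = pmin := Real.sq_sqrt hpmin_pos.le
  set C : ℝ := Lres * pmax / (2 * spm) with hCdef
  have hpmax_pos : 0 < pmax := lt_of_lt_of_le (hp_pos (Classical.arbitrary _)) (hpge _)
  have hC_pos : 0 < C := div_pos (mul_pos hLres_pos hpmax_pos) (by positivity)
  set Δ : PiLp 2 H := xb - xk with hΔdef
  set e : PiLp 2 H := f' xk - f' xh with hedef
  set Dv : ℝ := ∑ i, p i * ‖xb i - xk i‖ ^ 2 with hDdef
  set S1 : ℝ := ∑ t ∈ Finset.range τ, σ t with hS1def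
  set S2 : ℝ := ∑ t ∈ Finset.range τ, σ t ^ 2 with hS2def
  have hS1_nonneg : 0 ≤ S1 := Finset.sum_nonneg fun t _ => hσ t
  have hstep : ∀ i, Fobj f g (upd xk i (xb i))
      ≤ Fobj f g xk - (1 / γ i - L i / 2) * ‖xb i - xk i‖ ^ 2 + ⟪e i, xb i - xk i⟫ :=
    fun i => step_ineq f f' hf_grad g hg_convex γ hγ_pos L xk xh i (xb i) (hlipk i) (hprox i)
  have hwsum : ∑ i, p i * Fobj f g (upd xk i (xb i))
      ≤ ∑ i, p i * (Fobj f g xk - (1 / γ i - L i / 2) * ‖xb i - xk i‖ ^ 2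
          + ⟪e i, xb i - xk i⟫) :=
    Finset.sum_le_sum fun i _ => mul_le_mul_of_nonneg_left (hstep i) (hp_pos i).le
  have hexpand : ∑ i, p i * (Fobj f g xk - (1 / γ i - L i / 2) * ‖xb i - xk i‖ ^ 2
        + ⟪e i, xb i - xk i⟫)
      = Fobj f g xk - (∑ i, p i * ((1 / γ i - L i / 2) * ‖xb i - xk i‖ ^ 2))
        + ∑ i, p i * ⟪e i, xb i - xk i⟫ := by
    have hterm : ∀ i : Fin m, p i * (Fobj f g xk - (1 / γ i - L i / 2) * ‖xb i - xk i‖ ^ 2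
          + ⟪e i, xb i - xk i⟫)
        = Fobj f g xk * p i - p i * ((1 / γ i - L i / 2) * ‖xb i - xk i‖ ^ 2)
          + p i * ⟪e i, xb i - xk i⟫ := fun i => by ring
    rw [Finset.sum_congr rfl fun i _ => hterm i, Finset.sum_add_distrib,
      Finset.sum_sub_distrib, ← Finset.mul_sum, hpsum, mul_one]
  have hquad : a * Dv ≤ ∑ i, p i * ((1 / γ i - L i / 2) * ‖xb i - xk i‖ ^ 2) := by
    rw [hDdef, Finset.mul_sum]
    apply Finset.sum_le_sum
    intro i _
    have h1 : a * ‖xb i - xk i‖ ^ 2 ≤ (1 / γ i - L i / 2) * ‖xb i - xk i‖ ^ 2 :=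
      mul_le_mul_of_nonneg_right (ha i) (sq_nonneg _)
    calc a * (p i * ‖xb i - xk i‖ ^ 2) = p i * (a * ‖xb i - xk i‖ ^ 2) := by ring
    _ ≤ p i * ((1 / γ i - L i / 2) * ‖xb i - xk i‖ ^ 2) :=
      mul_le_mul_of_nonneg_left h1 (hp_pos i).le
  have hcross : ∑ i, p i * ⟪e i, xb i - xk i⟫ ≤ C * S2 + (C * τ) * Dv := by
    have hc1 : ∑ i, p i * ⟪e i, xb i - xk i⟫ ≤ pmax * ∑ i, ‖e i‖ * ‖xb i - xk i‖ := by
      rw [Finset.mul_sum]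
      apply Finset.sum_le_sum
      intro i _
      calc p i * ⟪e i, xb i - xk i⟫ ≤ p i * (‖e i‖ * ‖xb i - xk i‖) :=
            mul_le_mul_of_nonneg_left (real_inner_le_norm _ _) (hp_pos i).le
      _ ≤ pmax * (‖e i‖ * ‖xb i - xk i‖) :=
            mul_le_mul_of_nonneg_right (hpge i) (by positivity)
    have hcs : ∑ i, ‖e i‖ * ‖xb i - xk i‖ ≤ ‖e‖ * ‖Δ‖ := by
      have h2 := Finset.sum_mul_sq_le_sq_mul_sq Finset.univ (fun i => ‖e i‖)
        (fun i => ‖xb i - xk i‖)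
      have he2 : ∑ i, ‖e i‖ ^ 2 = ‖e‖ ^ 2 := (normsq_piLp e).symm
      have hd2 : ∑ i, ‖xb i - xk i‖ ^ 2 = ‖Δ‖ ^ 2 := (normsq_piLp Δ).symm
      have hnn : (0:ℝ) ≤ ∑ i, ‖e i‖ * ‖xb i - xk i‖ :=
        Finset.sum_nonneg fun i _ => by positivity
      simp only [he2, hd2] at h2
      calc ∑ i, ‖e i‖ * ‖xb i - xk i‖ = Real.sqrt ((∑ i, ‖e i‖ * ‖xb i - xk i‖) ^ 2) :=
            (Real.sqrt_sq hnn).symm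
      _ ≤ Real.sqrt ((‖e‖ * ‖Δ‖) ^ 2) := Real.sqrt_le_sqrt (by nlinarith [h2])
      _ = ‖e‖ * ‖Δ‖ := Real.sqrt_sq (by positivity)
    have hamgm : S1 * ‖Δ‖ ≤ S2 / (2 * spm) + (τ * spm / 2) * ‖Δ‖ ^ 2 := by
      rw [hS1def, Finset.sum_mul]
      calc ∑ t ∈ Finset.range τ, σ t * ‖Δ‖
          ≤ ∑ t ∈ Finset.range τ, (σ t ^ 2 / (2 * spm) + (spm / 2) * ‖Δ‖ ^ 2) := by
            apply Finset.sum_le_sum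
            intro t _
            rw [div_add' _ _ _ (by positivity : (2:ℝ) * spm ≠ 0), le_div_iff₀ (by positivity)]
            nlinarith [sq_nonneg (σ t - spm * ‖Δ‖), hspm, hσ t, norm_nonneg Δ]
      _ = S2 / (2 * spm) + (τ * spm / 2) * ‖Δ‖ ^ 2 := by
            rw [Finset.sum_add_distrib, Finset.sum_const, Finset.card_range, ← Finset.sum_div,
              ← hS2def, nsmul_eq_mul]
            ring
    have hDle : ‖Δ‖ ^ 2 ≤ Dv / pmin := by
      rw [normsq_piLp Δ, hDdef, le_div_iff₀ hpmin_pos, Finset.sum_mul]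
      apply Finset.sum_le_sum
      intro i _
      calc ‖Δ i‖ ^ 2 * pmin ≤ ‖Δ i‖ ^ 2 * p i :=
            mul_le_mul_of_nonneg_left (hple i) (sq_nonneg _)
      _ = p i * ‖xb i - xk i‖ ^ 2 := by rw [mul_comm, hΔdef, sub_coord]
    have hconst : pmax * (Lres * (τ * spm / 2)) / pmin = C * τ := by
      rw [hCdef, ← hspm2]
      field_simp
    calc ∑ i, p i * ⟪e i, xb i - xk i⟫ ≤ pmax * ∑ i, ‖e i‖ * ‖xb i - xk i‖ := hc1
    _ ≤ pmax * (‖e‖ * ‖Δ‖) := mul_le_mul_of_nonneg_left hcs hpmax_pos.le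
    _ ≤ pmax * ((Lres * S1) * ‖Δ‖) := by
        apply mul_le_mul_of_nonneg_left _ hpmax_pos.le
        exact mul_le_mul_of_nonneg_right hgrad (norm_nonneg _)
    _ = pmax * Lres * (S1 * ‖Δ‖) := by ring
    _ ≤ pmax * Lres * (S2 / (2 * spm) + (τ * spm / 2) * ‖Δ‖ ^ 2) := by
        apply mul_le_mul_of_nonneg_left hamgm (by positivity)
    _ ≤ pmax * Lres * (S2 / (2 * spm) + (τ * spm / 2) * (Dv / pmin)) := by
        apply mul_le_mul_of_nonneg_left _ (by positivity)
        have : (0:ℝ) ≤ (τ:ℝ) * spm / 2 := by positivity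
        nlinarith [hDle]
    _ = C * S2 + (pmax * (Lres * (τ * spm / 2)) / pmin) * Dv := by
        rw [hCdef]; field_simp
    _ = C * S2 + (C * τ) * Dv := by rw [hconst]
  calc ∑ i, p i * Fobj f g (upd xk i (xb i))
      ≤ Fobj f g xk - (∑ i, p i * ((1 / γ i - L i / 2) * ‖xb i - xk i‖ ^ 2))
        + ∑ i, p i * ⟪e i, xb i - xk i⟫ := by rw [← hexpand]; exact hwsum
  _ ≤ Fobj f g xk - a * Dv + (C * S2 + (C * τ) * Dv) := by linarith [hquad, hcross]
  _ = Fobj f g xk - (a - C * τ) * Dv + C * S2 := by ring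

end Star

/-- Proposition: vanishing subgradients at the virtual iterates. -/
theorem stmt10
    [∀ i, CompleteSpace (H i)] [∀ i, TopologicalSpace.SeparableSpace (H i)]
    (hm : 0 < m)
    {Ω : Type*} [MeasurableSpace Ω] (P : Measure Ω) [IsProbabilityMeasure P]
    (idx : ℕ → Ω → Fin m) (hidx_meas : ∀ k : ℕ, Measurable (idx k))
    (hidx_iid : iIndepFun idx P)
    (p : Fin m → ℝ) (hp_pos : ∀ i, 0 < p i)
    (hp_law : ∀ (k : ℕ) (i : Fin m), P {ω | idx k ω = i} = ENNReal.ofReal (p i))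
    (τ : ℕ) (d : ℕ → Fin m → ℕ) (hd : ∀ (k : ℕ) (j : Fin m), d k j ≤ min k τ)
    (γ : Fin m → ℝ) (hγ_pos : ∀ i, 0 < γ i)
    (f : PiLp 2 H → ℝ) (f' : PiLp 2 H → PiLp 2 H)
    (hf_grad : ∀ z : PiLp 2 H, HasGradientAt f (f' z) z)
    (hf_convex : ConvexOn ℝ Set.univ f)
    (Lres : ℝ) (hLres_pos : 0 < Lres) (L : Fin m → ℝ)
    (hf_lip_res : ∀ (z : PiLp 2 H) (i : Fin m) (u u' : H i),
      ‖f' (upd z i u) - f' (upd z i u')‖ ≤ Lres * ‖u - u'‖)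
    (hf_lip_blk : ∀ (z : PiLp 2 H) (i : Fin m) (u u' : H i),
      ‖f' (upd z i u) i - f' (upd z i u') i‖ ≤ L i * ‖u - u'‖)
    (g : ∀ i, H i → ℝ) (hg_convex : ∀ i, ConvexOn ℝ Set.univ (g i))
    (hg_lsc : ∀ i, LowerSemicontinuous (g i))
    (Fstar : ℝ) (hFstar : IsLeast (Set.range (Fobj f g)) Fstar)
    (x : ℤ → Ω → PiLp 2 H) (x0 : PiLp 2 H)
    (hx_init : ∀ n : ℤ, n ≤ 0 → ∀ ω : Ω, x n ω = x0)
    (xbar : ℕ → Ω → PiLp 2 H)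
    (hxbar_prox : ∀ (k : ℕ) (ω : Ω) (i : Fin m),
      IsProx (γ i) (g i) (x (k : ℤ) ω i - γ i • f' (xhatP x d k ω) i) (xbar k ω i))
    (hx_update : ∀ (k : ℕ) (ω : Ω),
      x ((k : ℤ) + 1) ω = upd (x (k : ℤ) ω) (idx k ω) (xbar k ω (idx k ω)))
    (pmax pmin : ℝ)
    (hpmax : IsGreatest (Set.range p) pmax) (hpmin : IsLeast (Set.range p) pmin)
    (δ : ℝ)
    (hδ : IsGreatest
      (Set.range fun i => γ i * (L i + 2 * τ * Lres * pmax / Real.sqrt pmin)) δ)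
    (hδ_lt : δ < 2)
 :
    ∃ v : ℕ → Ω → PiLp 2 H,
      ∀ᵐ ω ∂P,
        (∀ (k : ℕ) (z : PiLp 2 H),
          Fobj f g (xbar k ω) + ⟪v k ω, z - xbar k ω⟫ ≤ Fobj f g z) ∧
        Tendsto (fun k : ℕ => v k ω) atTop (𝓝 0) ∧
        Tendsto (fun k : ℕ => x (k : ℤ) ω - xbar k ω) atTop (𝓝 0) := by
  classical
  have hmne : Nonempty (Fin m) := Fin.pos_iff_nonempty.mp hm
  obtain ⟨i0, hi0⟩ := hpmin.1
  have hpmin_pos : 0 < pmin := hi0 ▸ hp_pos i0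
  have hple : ∀ i, pmin ≤ p i := fun i => hpmin.2 ⟨i, rfl⟩
  have hpge : ∀ i, p i ≤ pmax := fun i => hpmax.2 ⟨i, rfl⟩
  obtain ⟨i1, hi1⟩ := hpmax.1
  have hpmax_pos : 0 < pmax := hi1 ▸ hp_pos i1
  have hpsum : ∑ i, p i = 1 := by
    have h := exp_last_coord P hidx_meas hidx_iid hp_pos hp_law 0 (fun _ _ => 1)
      (fun _ _ _ => rfl)
    simp only [integral_const, measureReal_def, measure_univ, ENNReal.toReal_one, one_smul, mul_one] at h
    exact h.symm
  set spm : ℝ := Real.sqrt pmin with hspmdef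
  have hspm : 0 < spm := Real.sqrt_pos.mpr hpmin_pos
  have hspm2 : spm ^ 2 = pmin := Real.sq_sqrt hpmin_pos.le
  set C : ℝ := Lres * pmax / (2 * spm) with hCdef
  have hC_pos : 0 < C := div_pos (mul_pos hLres_pos hpmax_pos) (by positivity)
  set A : Fin m → ℝ := fun i => 1 / γ i - L i / 2 with hAdef
  set a : ℝ := Finset.univ.inf' Finset.univ_nonempty A with hadef
  have ha_le : ∀ i, a ≤ A i := fun i => Finset.inf'_le _ (Finset.mem_univ i)
  have hkey_i : ∀ i, 2 * C * τ < A i := by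
    intro i
    have h1 : γ i * (L i + 2 * τ * Lres * pmax / spm) ≤ δ := hδ.2 (Set.mem_range_self i)
    have h2 : γ i * (L i + 2 * τ * Lres * pmax / spm) < 2 := lt_of_le_of_lt h1 hδ_lt
    have hγ := hγ_pos i
    have h3 : L i + 2 * τ * Lres * pmax / spm < 2 / γ i := by
      rw [lt_div_iff₀ hγ]
      nlinarith [h2]
    have hq : 2 * (τ:ℝ) * Lres * pmax / spm = 2 * ((τ:ℝ) * Lres * pmax / spm) := by ring
    have hCτ : 2 * C * (τ:ℝ) = (τ:ℝ) * Lres * pmax / spm := by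
      rw [hCdef]; field_simp
    have h4 : 2 / γ i = 2 * (1 / γ i) := by ring
    rw [hAdef]
    simp only []
    linarith [h3, hq, hCτ, h4]
  set ε : ℝ := a - 2 * C * τ with hεdef
  have hε_pos : 0 < ε := by
    have : 2 * C * τ < a := by
      rw [hadef, Finset.lt_inf'_iff]
      exact fun i _ => hkey_i i
    linarith
  -- determinism of the trajectory in the past indices
  have hdetx : ∀ (k : ℕ) (ω ω' : Ω), (∀ j, j < k → idx j ω = idx j ω') →
      ∀ n : ℤ, n ≤ (k:ℤ) → x n ω = x n ω' := by
    intro k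
    induction k with
    | zero =>
      intro ω ω' _ n hn
      rw [hx_init n (by exact_mod_cast hn), hx_init n (by exact_mod_cast hn)]
    | succ k IH =>
      intro ω ω' hmatch n hn
      have hm' : ∀ j, j < k → idx j ω = idx j ω' := fun j hj => hmatch j (by omega)
      rcases le_or_gt n (k:ℤ) with hle | hgt
      · exact IH ω ω' hm' n hle
      · have hn' : n = (k:ℤ) + 1 := by push_cast at hn; omega
        subst hn'
        rw [hx_update k ω, hx_update k ω']
        have hxk : x (k:ℤ) ω = x (k:ℤ) ω' := IH ω ω' hm' _ le_rfl
        have hxh : xhatP x d k ω = xhatP x d k ω' := by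
          ext j
          show x ((k:ℤ) - d k j) ω j = x ((k:ℤ) - d k j) ω' j
          rw [IH ω ω' hm' _ (by omega)]
        have hxbar : xbar k ω = xbar k ω' := by
          ext i
          have h1 := hxbar_prox k ω i
          have h2 := hxbar_prox k ω' i
          rw [hxk, hxh] at h1
          exact h2.2 (xbar k ω i) (h1.1 (xbar k ω' i))
        rw [hmatch k (by omega), hxk, hxbar]
  have hdetxbar : ∀ (k : ℕ) (ω ω' : Ω), (∀ j, j < k → idx j ω = idx j ω') →
      xbar k ω = xbar k ω' := by
    intro k ω ω' hmatch
    have hxk : x (k:ℤ) ω = x (k:ℤ) ω' := hdetx k ω ω' hmatch _ le_rfl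
    have hxh : xhatP x d k ω = xhatP x d k ω' := by
      ext j
      show x ((k:ℤ) - d k j) ω j = x ((k:ℤ) - d k j) ω' j
      rw [hdetx k ω ω' hmatch _ (by omega)]
    ext i
    have h1 := hxbar_prox k ω i
    have h2 := hxbar_prox k ω' i
    rw [hxk, hxh] at h1
    exact h2.2 (xbar k ω i) (h1.1 (xbar k ω' i))
  
  -- per-ω quantities
  set Dq : ℕ → Ω → ℝ := fun k ω => ∑ i, p i * ‖xbar k ω i - x (k:ℤ) ω i‖ ^ 2 with hDqdef
  set σf : ℕ → Ω → ℕ → ℝ :=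
    fun k ω t => ‖x ((k:ℤ) - τ + t + 1) ω - x ((k:ℤ) - τ + t) ω‖ with hσfdef
  have hy0 : ∀ ω, ∀ n : ℤ, n ≤ 0 → x n ω = x 0 ω := fun ω n hn => by
    rw [hx_init n hn, hx_init 0 le_rfl]
  have hstp : ∀ ω, ∀ n : ℕ, ∃ (i : Fin m) (u : H i), x ((n:ℤ)+1) ω = upd (x (n:ℤ) ω) i u :=
    fun ω n => ⟨idx n ω, xbar n ω (idx n ω), hx_update n ω⟩
  have hstar : ∀ (k : ℕ) (ω : Ω),
      ∑ i, p i * Fobj f g (upd (x (k:ℤ) ω) i (xbar k ω i))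
        ≤ Fobj f g (x (k:ℤ) ω) - (a - C * τ) * Dq k ω
          + C * ∑ t ∈ Finset.range τ, (σf k ω t) ^ 2 := by
    intro k ω
    have hgradb : ‖f' (x (k:ℤ) ω) - f' (xhatP x d k ω)‖
        ≤ Lres * ∑ t ∈ Finset.range τ, σf k ω t := by
      have h1 := grad_diff_le f' hf_lip_res Finset.univ (x (k:ℤ) ω) (xhatP x d k ω)
        (fun j hj => absurd (Finset.mem_univ j) hj)
      have h2 := xhat_coord_bound (fun n => x n ω) (hy0 ω) (hstp ω) τ d hd k
      calc ‖f' (x (k:ℤ) ω) - f' (xhatP x d k ω)‖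
          ≤ Lres * ∑ j, ‖x (k:ℤ) ω j - xhatP x d k ω j‖ := h1
      _ ≤ Lres * ∑ t ∈ Finset.range τ, σf k ω t :=
          mul_le_mul_of_nonneg_left h2 hLres_pos.le
    exact star_ineq f f' hf_grad g hg_convex γ hγ_pos L p hp_pos hpsum hpmin_pos hple hpge
      hLres_pos ha_le τ (σf k ω) (fun t => norm_nonneg _) (x (k:ℤ) ω) (xhatP x d k ω)
      (xbar k ω) (fun i => hf_lip_blk (x (k:ℤ) ω) i) (hxbar_prox k ω) hgradb
  -- determinism of derived quantities and integrability
  have hdetD : ∀ k (ω ω' : Ω), (∀ j, j < k → idx j ω = idx j ω') → Dq k ω = Dq k ω' := by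
    intro k ω ω' hmatch
    rw [hDqdef]
    simp only [hdetx k ω ω' hmatch _ le_rfl, hdetxbar k ω ω' hmatch]
  have hintD : ∀ k, Integrable (Dq k) P := fun k =>
    finitary_integrable P hidx_meas hidx_iid hp_pos hp_law k (Dq k) (hdetD k)
  have hmeasD : ∀ k, Measurable (Dq k) := fun k =>
    finitary_measurable P hidx_meas hidx_iid hp_pos hp_law k (Dq k) (hdetD k)
  have hD_nonneg : ∀ k ω, 0 ≤ Dq k ω := fun k ω =>
    Finset.sum_nonneg fun i _ => mul_nonneg (hp_pos i).le (sq_nonneg _)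
  set ED : ℕ → ℝ := fun n => ∫ ω, Dq n ω ∂P with hEDdef
  have hED_nonneg : ∀ n, 0 ≤ ED n := fun n => integral_nonneg (fun ω => hD_nonneg n ω)
  have hE2 : ∀ n : ℕ, ∫ ω, ‖x ((n:ℤ)+1) ω - x (n:ℤ) ω‖ ^ 2 ∂P = ED n := by
    intro n
    have hpt : (fun ω => ‖x ((n:ℤ)+1) ω - x (n:ℤ) ω‖ ^ 2)
        = fun ω => (fun (ω : Ω) (i : Fin m) => ‖xbar n ω i - x (n:ℤ) ω i‖ ^ 2) ω (idx n ω) := by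
      funext ω
      rw [hx_update n ω]
      exact normsq_upd_sub _ _ _
    rw [hpt]
    have hdetΦ2 : ∀ ω ω', (∀ j, j < n → idx j ω = idx j ω') →
        (fun i : Fin m => ‖xbar n ω i - x (n:ℤ) ω i‖ ^ 2)
          = fun i : Fin m => ‖xbar n ω' i - x (n:ℤ) ω' i‖ ^ 2 := by
      intro ω ω' hmatch
      funext i
      rw [hdetx n ω ω' hmatch _ le_rfl, hdetxbar n ω ω' hmatch]
    have heq := exp_last_coord P hidx_meas hidx_iid hp_pos hp_law n
      (fun ω i => ‖xbar n ω i - x (n:ℤ) ω i‖ ^ 2) hdetΦ2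
    exact heq.trans rfl
  set EDz : ℤ → ℝ := fun h => if h0 : 0 ≤ h then ED h.toNat else 0 with hEDzdef
  have hEDz_nonneg : ∀ h, 0 ≤ EDz h := fun h => by
    rw [hEDzdef]; dsimp only; split
    · exact hED_nonneg _
    · exact le_rfl
  have hEDz_int : ∀ hz : ℤ, ∫ ω, ‖x (hz+1) ω - x hz ω‖ ^ 2 ∂P = EDz hz := by
    intro hz
    rcases le_or_gt 0 hz with h0 | h0
    · obtain ⟨n, rfl⟩ : ∃ n : ℕ, hz = (n:ℤ) := ⟨hz.toNat, (Int.toNat_of_nonneg h0).symm⟩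
      rw [hE2 n, hEDzdef]
      simp
    · have hfun : (fun ω => ‖x (hz+1) ω - x hz ω‖ ^ 2) = fun _ => (0:ℝ) := by
        funext ω
        rw [hx_init _ (by omega) ω, hx_init _ (by omega) ω, sub_self, norm_zero]
        norm_num
      rw [hfun, integral_zero, hEDzdef]
      dsimp only
      rw [dif_neg (by omega)]
  have hdetF : ∀ (n : ℕ) (ω ω' : Ω), (∀ j, j < n → idx j ω = idx j ω') →
      Fobj f g (x (n:ℤ) ω) = Fobj f g (x (n:ℤ) ω') := by
    intro n ω ω' hmatch
    rw [hdetx n ω ω' hmatch _ le_rfl]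
  have hintF : ∀ n : ℕ, Integrable (fun ω => Fobj f g (x (n:ℤ) ω)) P := fun n =>
    finitary_integrable P hidx_meas hidx_iid hp_pos hp_law n _ (hdetF n)
  have hintS2 : ∀ k : ℕ, Integrable (fun ω => ∑ t ∈ Finset.range τ, (σf k ω t) ^ 2) P := by
    intro k
    apply finitary_integrable P hidx_meas hidx_iid hp_pos hp_law k
    intro ω ω' hmatch
    apply Finset.sum_congr rfl
    intro t ht
    have ht' : t < τ := Finset.mem_range.mp ht
    rw [hσfdef]
    simp only [hdetx k ω ω' hmatch ((k:ℤ) - τ + t + 1) (by omega),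
      hdetx k ω ω' hmatch ((k:ℤ) - τ + t) (by omega)]
  have hkey : ∀ k : ℕ, ∫ ω, Fobj f g (x ((k:ℤ)+1) ω) ∂P
      ≤ ∫ ω, Fobj f g (x (k:ℤ) ω) ∂P - (a - C*τ) * ED k
        + C * ∑ t ∈ Finset.range τ, EDz ((k:ℤ) - τ + t) := by
    intro k
    have hptA : (fun ω => Fobj f g (x ((k:ℤ)+1) ω))
        = fun ω => (fun (ω : Ω) (i : Fin m) => Fobj f g (upd (x (k:ℤ) ω) i (xbar k ω i))) ω
            (idx k ω) := by
      funext ω; rw [hx_update k ω]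
    have hdetΦ : ∀ ω ω', (∀ j, j < k → idx j ω = idx j ω') →
        (fun i => Fobj f g (upd (x (k:ℤ) ω) i (xbar k ω i)))
          = fun i => Fobj f g (upd (x (k:ℤ) ω') i (xbar k ω' i)) := by
      intro ω ω' hmatch
      rw [hdetx k ω ω' hmatch _ le_rfl, hdetxbar k ω ω' hmatch]
    have hA := exp_last_coord P hidx_meas hidx_iid hp_pos hp_law k _ hdetΦ
    rw [hptA, hA]
    have hintLHS : Integrable
        (fun ω => ∑ i, p i * Fobj f g (upd (x (k:ℤ) ω) i (xbar k ω i))) P := by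
      apply finitary_integrable P hidx_meas hidx_iid hp_pos hp_law k
      intro ω ω' hmatch
      simp only [hdetx k ω ω' hmatch _ le_rfl, hdetxbar k ω ω' hmatch]
    have hintRHS : Integrable (fun ω => Fobj f g (x (k:ℤ) ω) - (a - C*τ) * Dq k ω
        + C * ∑ t ∈ Finset.range τ, (σf k ω t) ^ 2) P :=
      ((hintF k).sub ((hintD k).const_mul _)).add ((hintS2 k).const_mul C)
    have hmono := integral_mono hintLHS hintRHS (fun ω => hstar k ω)
    have hsplit : ∫ ω, (Fobj f g (x (k:ℤ) ω) - (a - C*τ) * Dq k ω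
          + C * ∑ t ∈ Finset.range τ, (σf k ω t) ^ 2) ∂P
        = ∫ ω, Fobj f g (x (k:ℤ) ω) ∂P - (a - C*τ) * ED k
          + C * ∫ ω, ∑ t ∈ Finset.range τ, (σf k ω t) ^ 2 ∂P := by
      have hint1 : Integrable (fun ω => Fobj f g (x (k:ℤ) ω) - (a - C*τ) * Dq k ω) P :=
        (hintF k).sub ((hintD k).const_mul _)
      have hint2 : Integrable (fun ω => C * ∑ t ∈ Finset.range τ, (σf k ω t) ^ 2) P :=
        (hintS2 k).const_mul C
      have hint3 : Integrable (fun ω => (a - C*τ) * Dq k ω) P := (hintD k).const_mul _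
      rw [integral_add hint1 hint2, integral_sub (hintF k) hint3, integral_const_mul,
        integral_const_mul]
    have hS2int : ∫ ω, ∑ t ∈ Finset.range τ, (σf k ω t) ^ 2 ∂P
        = ∑ t ∈ Finset.range τ, EDz ((k:ℤ) - τ + t) := by
      have hterm : ∀ t, Integrable (fun ω => (σf k ω t) ^ 2) P := by
        intro t
        rcases le_or_gt 0 ((k:ℤ) - τ + t) with h0 | h0
        · apply finitary_integrable P hidx_meas hidx_iid hp_pos hp_law (((k:ℤ) - τ + t).toNat + 1)
          intro ω ω' hmatch
          rw [hσfdef]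
          simp only [hdetx (((k:ℤ) - τ + t).toNat + 1) ω ω' hmatch ((k:ℤ) - τ + t + 1) (by omega),
            hdetx (((k:ℤ) - τ + t).toNat + 1) ω ω' hmatch ((k:ℤ) - τ + t) (by omega)]
        · have : (fun ω => (σf k ω t) ^ 2) = fun _ => (0:ℝ) := by
            funext ω
            rw [hσfdef]
            dsimp only
            rw [hx_init _ (by omega) ω, hx_init _ (by omega) ω, sub_self, norm_zero]
            norm_num
          rw [this]
          exact integrable_const 0
      rw [integral_finset_sum _ (fun t _ => hterm t)]
      apply Finset.sum_congr rfl
      intro t _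
      exact hEDz_int ((k:ℤ) - τ + t)
    rw [hsplit, hS2int] at hmono
    exact hmono
  -- index-shift lemma for the double sum
  have hshift : ∀ (c N : ℕ), ∑ k ∈ Finset.range N, EDz ((k:ℤ) - c)
      = ∑ n ∈ Finset.range (N - c), ED n := by
    intro c N
    induction N with
    | zero => simp
    | succ N IH =>
      rw [Finset.sum_range_succ, IH]
      rcases le_or_gt c N with hc | hc
      · have h1 : EDz ((N:ℤ) - c) = ED (N - c) := by
          rw [hEDzdef]
          dsimp only
          rw [dif_pos (by omega : (0:ℤ) ≤ (N:ℤ) - c)]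
          congr 1
          omega
        rw [h1]
        have h2 : N + 1 - c = (N - c) + 1 := by omega
        rw [h2, Finset.sum_range_succ]
      · have h1 : EDz ((N:ℤ) - c) = 0 := by
          rw [hEDzdef]
          dsimp only
          rw [dif_neg (by omega)]
        rw [h1, add_zero]
        have h2 : N + 1 - c = N - c := by omega
        rw [h2]
  set EF : ℕ → ℝ := fun n => ∫ ω, Fobj f g (x (n:ℤ) ω) ∂P with hEFdef
  have hkey' : ∀ k, EF (k+1) - EF k
      ≤ -((a - C*τ) * ED k) + C * ∑ t ∈ Finset.range τ, EDz ((k:ℤ) - τ + t) := by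
    intro k
    have h := hkey k
    have hcast : (((k+1:ℕ)):ℤ) = (k:ℤ)+1 := by push_cast; ring
    rw [hEFdef]
    dsimp only
    rw [hcast]
    linarith [h]
  have hEF0 : EF 0 = Fobj f g x0 := by
    rw [hEFdef]
    dsimp only
    have hz : ((0:ℕ):ℤ) = 0 := by norm_num
    have hfun : (fun ω => Fobj f g (x ((0:ℕ):ℤ) ω)) = fun _ => Fobj f g x0 := by
      funext ω
      rw [hz, hx_init 0 le_rfl]
    rw [hfun, integral_const]
    simp
  have hEFge : ∀ n, Fstar ≤ EF n := by
    intro n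
    rw [hEFdef]
    dsimp only
    calc Fstar = ∫ _, Fstar ∂P := by rw [integral_const]; simp
    _ ≤ _ := integral_mono (integrable_const _) (hintF n)
        (fun ω => hFstar.2 ⟨x (n:ℤ) ω, rfl⟩)
  have hsumbound : ∀ N, ε * ∑ k ∈ Finset.range N, ED k ≤ Fobj f g x0 - Fstar := by
    intro N
    have htel : ∑ k ∈ Finset.range N, (EF (k+1) - EF k) = EF N - EF 0 :=
      Finset.sum_range_sub EF N
    have hs1 : EF N - EF 0 ≤ ∑ k ∈ Finset.range N,
        (-((a - C*τ) * ED k) + C * ∑ t ∈ Finset.range τ, EDz ((k:ℤ) - τ + t)) := by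
      rw [← htel]
      exact Finset.sum_le_sum (fun k _ => hkey' k)
    have hdouble : ∑ k ∈ Finset.range N, ∑ t ∈ Finset.range τ, EDz ((k:ℤ) - τ + t)
        ≤ τ * ∑ n ∈ Finset.range N, ED n := by
      rw [Finset.sum_comm]
      calc ∑ t ∈ Finset.range τ, ∑ k ∈ Finset.range N, EDz ((k:ℤ) - τ + t)
          ≤ ∑ _t ∈ Finset.range τ, ∑ n ∈ Finset.range N, ED n := by
            apply Finset.sum_le_sum
            intro t ht
            have ht' : t < τ := Finset.mem_range.mp ht
            have hidx2 : ∀ k : ℕ, (k:ℤ) - τ + t = (k:ℤ) - ((τ - t : ℕ):ℤ) := by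
              intro k; omega
            rw [Finset.sum_congr rfl (fun k _ => by rw [hidx2 k])]
            rw [hshift (τ - t) N]
            exact Finset.sum_le_sum_of_subset_of_nonneg
              (Finset.range_subset_range.mpr (by omega)) (fun n _ _ => hED_nonneg n)
      _ = τ * ∑ n ∈ Finset.range N, ED n := by
            rw [Finset.sum_const, Finset.card_range, nsmul_eq_mul]
    have hexp2 : ∑ k ∈ Finset.range N,
        (-((a - C*τ) * ED k) + C * ∑ t ∈ Finset.range τ, EDz ((k:ℤ) - τ + t))
        = -((a - C*τ) * ∑ k ∈ Finset.range N, ED k)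
          + C * ∑ k ∈ Finset.range N, ∑ t ∈ Finset.range τ, EDz ((k:ℤ) - τ + t) := by
      rw [Finset.sum_add_distrib]
      congr 1
      · rw [Finset.sum_neg_distrib, Finset.mul_sum]
      · rw [Finset.mul_sum]
    have hC2 : C * (∑ k ∈ Finset.range N, ∑ t ∈ Finset.range τ, EDz ((k:ℤ) - τ + t))
        ≤ C * (τ * ∑ n ∈ Finset.range N, ED n) :=
      mul_le_mul_of_nonneg_left hdouble hC_pos.le
    have hfin2 : EF N - EF 0 ≤ -((a - C*τ) * ∑ k ∈ Finset.range N, ED k)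
        + C * (τ * ∑ n ∈ Finset.range N, ED n) := by
      rw [hexp2] at hs1
      linarith [hs1, hC2]
    have hES : ε * ∑ k ∈ Finset.range N, ED k
        = (a - C*τ) * ∑ k ∈ Finset.range N, ED k
          - C * (τ * ∑ n ∈ Finset.range N, ED n) := by
      rw [hεdef]; ring
    have h0 := hEFge N
    rw [hEF0] at hfin2
    linarith [hfin2, hES.le, hES.ge, h0]
  set B : ℝ := (Fobj f g x0 - Fstar) / ε with hBdef
  have hsum_le : ∀ N, ∑ k ∈ Finset.range N, ED k ≤ B := by
    intro N
    rw [hBdef, le_div_iff₀ hε_pos]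
    calc (∑ k ∈ Finset.range N, ED k) * ε = ε * ∑ k ∈ Finset.range N, ED k := mul_comm _ _
    _ ≤ _ := hsumbound N
  have htsum : ∑' k, ENNReal.ofReal (ED k) ≤ ENNReal.ofReal B := by
    rw [ENNReal.tsum_eq_iSup_sum]
    apply iSup_le
    intro s
    obtain ⟨N, hN⟩ := s.exists_nat_subset_range
    calc ∑ k ∈ s, ENNReal.ofReal (ED k)
        ≤ ∑ k ∈ Finset.range N, ENNReal.ofReal (ED k) := Finset.sum_le_sum_of_subset hN
    _ = ENNReal.ofReal (∑ k ∈ Finset.range N, ED k) :=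
        (ENNReal.ofReal_sum_of_nonneg (fun k _ => hED_nonneg k)).symm
    _ ≤ ENNReal.ofReal B := ENNReal.ofReal_le_ofReal (hsum_le N)
  have hlint : ∫⁻ ω, (∑' k, ENNReal.ofReal (Dq k ω)) ∂P ≤ ENNReal.ofReal B := by
    rw [lintegral_tsum (fun k => ((hmeasD k).ennreal_ofReal).aemeasurable)]
    calc ∑' k, ∫⁻ ω, ENNReal.ofReal (Dq k ω) ∂P = ∑' k, ENNReal.ofReal (ED k) :=
          tsum_congr (fun k =>
            (ofReal_integral_eq_lintegral_ofReal (hintD k) (ae_of_all _ (hD_nonneg k))).symm)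
    _ ≤ ENNReal.ofReal B := htsum
  have hae : ∀ᵐ ω ∂P, (∑' k, ENNReal.ofReal (Dq k ω)) < ⊤ :=
    ae_lt_top (Measurable.ennreal_tsum (fun k => (hmeasD k).ennreal_ofReal))
      (lt_of_le_of_lt hlint ENNReal.ofReal_lt_top).ne
  
  -- the candidate subgradient sequence
  set v : ℕ → Ω → PiLp 2 H := fun k ω =>
    (WithLp.toLp 2 (fun i => (γ i)⁻¹ • (x (k:ℤ) ω i - xbar k ω i)
      + (f' (xbar k ω) i - f' (xhatP x d k ω) i)) : PiLp 2 H) with hvdef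
  set gmin : ℝ := Finset.univ.inf' Finset.univ_nonempty γ with hgmindef
  have hgmin_pos : 0 < gmin := by
    rw [hgmindef, Finset.lt_inf'_iff]
    exact fun i _ => hγ_pos i
  have hgmin_le : ∀ i, gmin ≤ γ i := fun i => Finset.inf'_le _ (Finset.mem_univ i)
  have hsubgrad : ∀ (k : ℕ) (ω : Ω) (z : PiLp 2 H),
      Fobj f g (xbar k ω) + ⟪v k ω, z - xbar k ω⟫ ≤ Fobj f g z := by
    intro k ω z
    have hfpart : f (xbar k ω) + ⟪f' (xbar k ω), z - xbar k ω⟫ ≤ f z :=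
      convex_gradient_ineq hf_convex (hf_grad (xbar k ω))
    have hgpart : ∀ i, g i (xbar k ω i)
        + ⟪(γ i)⁻¹ • (x (k:ℤ) ω i - xbar k ω i) - f' (xhatP x d k ω) i, z i - xbar k ω i⟫
          ≤ g i (z i) := by
      intro i
      have h := prox_subgrad (hγ_pos i) (hg_convex i) (hxbar_prox k ω i) (z i)
      have hv2 : (1 / γ i) * ⟪x (k:ℤ) ω i - γ i • f' (xhatP x d k ω) i - xbar k ω i,
          z i - xbar k ω i⟫
          = ⟪(γ i)⁻¹ • (x (k:ℤ) ω i - xbar k ω i) - f' (xhatP x d k ω) i,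
              z i - xbar k ω i⟫ := by
        rw [← real_inner_smul_left]
        congr 1
        simp only [one_div, smul_sub, smul_smul]
        rw [inv_mul_cancel₀ (ne_of_gt (hγ_pos i)), one_smul]
        abel
      rw [hv2] at h
      exact h
    have hinner : ⟪v k ω, z - xbar k ω⟫
        = ⟪f' (xbar k ω), z - xbar k ω⟫
          + ∑ i, ⟪(γ i)⁻¹ • (x (k:ℤ) ω i - xbar k ω i) - f' (xhatP x d k ω) i,
              z i - xbar k ω i⟫ := by
      rw [PiLp.inner_apply, PiLp.inner_apply, ← Finset.sum_add_distrib]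
      apply Finset.sum_congr rfl
      intro i _
      have hco : (v k ω) i = (γ i)⁻¹ • (x (k:ℤ) ω i - xbar k ω i)
          + (f' (xbar k ω) i - f' (xhatP x d k ω) i) := rfl
      rw [hco, sub_coord]
      rw [inner_add_left, inner_sub_left, inner_sub_left]
      ring
    have hgsum : (∑ i, g i (xbar k ω i))
        + ∑ i, ⟪(γ i)⁻¹ • (x (k:ℤ) ω i - xbar k ω i) - f' (xhatP x d k ω) i,
            z i - xbar k ω i⟫ ≤ ∑ i, g i (z i) := by
      have h := Finset.sum_le_sum (fun i (_ : i ∈ Finset.univ) => hgpart i)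
      rw [Finset.sum_add_distrib] at h
      exact h
    rw [Fobj, Fobj, hinner]
    linarith [hfpart, hgsum]
  refine ⟨v, ?_⟩
  filter_upwards [hae] with ω hω
  -- a.e. summability
  have hsummable : Summable (fun k => Dq k ω) := by
    have hne : (∑' k, ENNReal.ofReal (Dq k ω)) ≠ ⊤ := hω.ne
    have h1 := ENNReal.summable_toReal hne
    exact h1.congr (fun k => ENNReal.toReal_ofReal (hD_nonneg k ω))
  have hD0 : Tendsto (fun k => Dq k ω) atTop (𝓝 0) := hsummable.tendsto_atTop_zero
  have hb0 : Tendsto (fun k => Real.sqrt (Dq k ω / pmin)) atTop (𝓝 0) := by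
    have h1 : Tendsto (fun k => Dq k ω / pmin) atTop (𝓝 0) := by
      simpa using hD0.div_const pmin
    have h2 := (Real.continuous_sqrt.tendsto 0).comp h1
    simpa [Function.comp_def] using h2
  have hΔle : ∀ k : ℕ, ‖x (k:ℤ) ω - xbar k ω‖ ≤ Real.sqrt (Dq k ω / pmin) := by
    intro k
    have h1 : ‖x (k:ℤ) ω - xbar k ω‖ ^ 2 ≤ Dq k ω / pmin := by
      rw [normsq_piLp, le_div_iff₀ hpmin_pos, Finset.sum_mul]
      apply Finset.sum_le_sum
      intro i _
      calc ‖(x (k:ℤ) ω - xbar k ω) i‖ ^ 2 * pmin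
          ≤ ‖(x (k:ℤ) ω - xbar k ω) i‖ ^ 2 * p i :=
            mul_le_mul_of_nonneg_left (hple i) (sq_nonneg _)
      _ = p i * ‖xbar k ω i - x (k:ℤ) ω i‖ ^ 2 := by
            rw [mul_comm, sub_coord, norm_sub_rev]
    calc ‖x (k:ℤ) ω - xbar k ω‖ = Real.sqrt (‖x (k:ℤ) ω - xbar k ω‖ ^ 2) :=
          (Real.sqrt_sq (norm_nonneg _)).symm
    _ ≤ _ := Real.sqrt_le_sqrt h1
  have hxdiff0 : Tendsto (fun k : ℕ => x (k:ℤ) ω - xbar k ω) atTop (𝓝 0) := by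
    rw [tendsto_zero_iff_norm_tendsto_zero]
    exact squeeze_zero (fun k => norm_nonneg _) hΔle hb0
  have hδle : ∀ n : ℕ, ‖x ((n:ℤ)+1) ω - x (n:ℤ) ω‖ ≤ Real.sqrt (Dq n ω / pmin) := by
    intro n
    rw [hx_update n ω, norm_upd_sub]
    have h1 : ‖xbar n ω (idx n ω) - x (n:ℤ) ω (idx n ω)‖ ^ 2 ≤ Dq n ω / pmin := by
      rw [le_div_iff₀ hpmin_pos]
      calc ‖xbar n ω (idx n ω) - x (n:ℤ) ω (idx n ω)‖ ^ 2 * pmin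
          ≤ p (idx n ω) * ‖xbar n ω (idx n ω) - x (n:ℤ) ω (idx n ω)‖ ^ 2 := by
            rw [mul_comm]
            exact mul_le_mul_of_nonneg_right (hple _) (sq_nonneg _)
      _ ≤ Dq n ω := Finset.single_le_sum
            (f := fun i => p i * ‖xbar n ω i - x (n:ℤ) ω i‖ ^ 2)
            (fun i _ => mul_nonneg (hp_pos i).le (sq_nonneg _)) (Finset.mem_univ _)
    calc ‖xbar n ω (idx n ω) - x (n:ℤ) ω (idx n ω)‖
        = Real.sqrt (‖xbar n ω (idx n ω) - x (n:ℤ) ω (idx n ω)‖ ^ 2) :=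
          (Real.sqrt_sq (norm_nonneg _)).symm
    _ ≤ _ := Real.sqrt_le_sqrt h1
  have hstep0 : Tendsto (fun n : ℕ => ‖x ((n:ℤ)+1) ω - x (n:ℤ) ω‖) atTop (𝓝 0) :=
    squeeze_zero (fun n => norm_nonneg _) hδle hb0
  have hS1to0 : Tendsto (fun k => ∑ t ∈ Finset.range τ, σf k ω t) atTop (𝓝 0) := by
    have hterm : ∀ t ∈ Finset.range τ, Tendsto (fun k => σf k ω t) atTop (𝓝 0) := by
      intro t ht
      have ht' : t < τ := Finset.mem_range.mp ht
      have hcomp : Tendsto (fun k : ℕ =>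
          ‖x (((k - (τ - t) : ℕ):ℤ)+1) ω - x ((k - (τ - t) : ℕ):ℤ) ω‖) atTop (𝓝 0) :=
        hstep0.comp (tendsto_sub_atTop_nat (τ - t))
      apply hcomp.congr'
      filter_upwards [eventually_ge_atTop τ] with k hk
      have hi : ((k - (τ - t) : ℕ):ℤ) = (k:ℤ) - τ + t := by omega
      rw [hσfdef]
      dsimp only
      rw [hi]
    have h := tendsto_finset_sum (Finset.range τ) hterm
    simpa using h
  have hxhat : ∀ k : ℕ, ∑ j, ‖x (k:ℤ) ω j - xhatP x d k ω j‖
      ≤ ∑ t ∈ Finset.range τ, σf k ω t :=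
    fun k => xhat_coord_bound (fun n => x n ω) (hy0 ω) (hstp ω) τ d hd k
  have hvle : ∀ k : ℕ, ‖v k ω‖ ≤ gmin⁻¹ * ‖x (k:ℤ) ω - xbar k ω‖
      + Lres * ((m:ℝ) * ‖x (k:ℤ) ω - xbar k ω‖ + ∑ t ∈ Finset.range τ, σf k ω t) := by
    intro k
    set w1 : PiLp 2 H := (WithLp.toLp 2 (fun i => (γ i)⁻¹ • (x (k:ℤ) ω i - xbar k ω i)) : PiLp 2 H)
      with hw1
    set w2 : PiLp 2 H := f' (xbar k ω) - f' (xhatP x d k ω) with hw2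
    have hsplitv : v k ω = w1 + w2 := rfl
    have h1 : ‖w1‖ ≤ gmin⁻¹ * ‖x (k:ℤ) ω - xbar k ω‖ := by
      have hsq : ‖w1‖ ^ 2 ≤ (gmin⁻¹ * ‖x (k:ℤ) ω - xbar k ω‖) ^ 2 := by
        rw [normsq_piLp, mul_pow, normsq_piLp (x (k:ℤ) ω - xbar k ω), Finset.mul_sum]
        apply Finset.sum_le_sum
        intro i _
        have hco : w1 i = (γ i)⁻¹ • (x (k:ℤ) ω i - xbar k ω i) := rfl
        rw [hco, norm_smul, Real.norm_eq_abs,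
          abs_of_pos (inv_pos.mpr (hγ_pos i)), mul_pow, sub_coord]
        apply mul_le_mul_of_nonneg_right _ (sq_nonneg _)
        have hinv : (γ i)⁻¹ ≤ gmin⁻¹ := by
          rw [inv_le_inv₀ (hγ_pos i) hgmin_pos]
          exact hgmin_le i
        exact pow_le_pow_left₀ (inv_pos.mpr (hγ_pos i)).le hinv 2
      have hrhs : (0:ℝ) ≤ gmin⁻¹ * ‖x (k:ℤ) ω - xbar k ω‖ := by positivity
      nlinarith [norm_nonneg w1]
    have h2 : ‖w2‖ ≤ Lres * ((m:ℝ) * ‖x (k:ℤ) ω - xbar k ω‖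
        + ∑ t ∈ Finset.range τ, σf k ω t) := by
      have hgd := grad_diff_le f' hf_lip_res Finset.univ (xbar k ω) (xhatP x d k ω)
        (fun j hj => absurd (Finset.mem_univ j) hj)
      have htri : ∑ i, ‖xbar k ω i - xhatP x d k ω i‖
          ≤ (m:ℝ) * ‖x (k:ℤ) ω - xbar k ω‖ + ∑ t ∈ Finset.range τ, σf k ω t := by
        calc ∑ i, ‖xbar k ω i - xhatP x d k ω i‖
            ≤ ∑ i, (‖xbar k ω i - x (k:ℤ) ω i‖ + ‖x (k:ℤ) ω i - xhatP x d k ω i‖) := by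
              apply Finset.sum_le_sum
              intro i _
              exact norm_sub_le_norm_sub_add_norm_sub _ _ _
        _ = (∑ i, ‖xbar k ω i - x (k:ℤ) ω i‖)
            + ∑ i, ‖x (k:ℤ) ω i - xhatP x d k ω i‖ := Finset.sum_add_distrib
        _ ≤ (m:ℝ) * ‖x (k:ℤ) ω - xbar k ω‖ + ∑ t ∈ Finset.range τ, σf k ω t := by
              apply add_le_add _ (hxhat k)
              calc ∑ i, ‖xbar k ω i - x (k:ℤ) ω i‖
                  ≤ ∑ _i : Fin m, ‖x (k:ℤ) ω - xbar k ω‖ := by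
                    apply Finset.sum_le_sum
                    intro i _
                    rw [norm_sub_rev]
                    have := norm_coord_le (x (k:ℤ) ω - xbar k ω) i
                    rwa [sub_coord] at this
              _ = (m:ℝ) * ‖x (k:ℤ) ω - xbar k ω‖ := by
                    rw [Finset.sum_const, Finset.card_univ, Fintype.card_fin, nsmul_eq_mul]
      calc ‖w2‖ ≤ Lres * ∑ i, ‖xbar k ω i - xhatP x d k ω i‖ := hgd
      _ ≤ _ := mul_le_mul_of_nonneg_left htri hLres_pos.le
    calc ‖v k ω‖ = ‖w1 + w2‖ := by rw [hsplitv]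
    _ ≤ ‖w1‖ + ‖w2‖ := norm_add_le _ _
    _ ≤ _ := add_le_add h1 h2
  have hnorm0 : Tendsto (fun k : ℕ => ‖x (k:ℤ) ω - xbar k ω‖) atTop (𝓝 0) := by
    have := hxdiff0.norm
    simpa using this
  have hbound0 : Tendsto (fun k : ℕ => gmin⁻¹ * ‖x (k:ℤ) ω - xbar k ω‖
      + Lres * ((m:ℝ) * ‖x (k:ℤ) ω - xbar k ω‖ + ∑ t ∈ Finset.range τ, σf k ω t))
      atTop (𝓝 0) := by
    have h1 := hnorm0.const_mul gmin⁻¹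
    have h2 := ((hnorm0.const_mul (m:ℝ)).add hS1to0).const_mul Lres
    have h3 := h1.add h2
    simpa using h3
  have hv0 : Tendsto (fun k => v k ω) atTop (𝓝 0) := by
    rw [tendsto_zero_iff_norm_tendsto_zero]
    exact squeeze_zero (fun k => norm_nonneg _) hvle hbound0
  exact ⟨fun k z => hsubgrad k ω z, hv0, hxdiff0⟩
end
end

section
/- For every k ∈ ℕ: ⟨∇f(x^k) − ∇f(x̂^k), x^{k+1} − x^k⟩ ≤ τ L_res · ‖x^{k+1} − x^k‖² + α̃_k − α̃_{k+1}, where α̃_k = (L_res/2) · Σ_{h=k−τ}^{k−1} (h − (k−τ) + 1) · ‖x^{h+1} − x^h‖². -/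
open MeasureTheory ProbabilityTheory Filter Topology Set
open scoped BigOperators RealInnerProductSpace ENNReal

noncomputable section

set_option synthInstance.maxHeartbeats 400000
set_option maxHeartbeats 1000000

variable {m : ℕ} {H : Fin m → Type*}
  [∀ i, NormedAddCommGroup (H i)] [∀ i, InnerProductSpace ℝ (H i)]

lemma sum_shift' (a : ℕ → ℝ) (n : ℕ) :
    ∑ j ∈ Finset.range n, ((j:ℝ)+1) * a (j+1)
      = (n:ℝ) * a n + ∑ j ∈ Finset.range n, ((j:ℝ)+1) * a j
        - ∑ j ∈ Finset.range n, a j := by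
  induction n with
  | zero => simp
  | succ n ih =>
      rw [Finset.sum_range_succ, ih, Finset.sum_range_succ (fun j => ((j:ℝ)+1) * a j),
        Finset.sum_range_succ (fun j => a j)]
      push_cast; ring

/-- Lemma: deterministic delayed-gradient bound with `α̃`. -/
theorem stmt15
    [∀ i, CompleteSpace (H i)]
    (hm : 0 < m)
    (τ : ℕ) (d : ℕ → Fin m → ℕ) (hd : ∀ (k : ℕ) (j : Fin m), d k j ≤ min k τ)
    (idx : ℕ → Fin m)
    (x : ℤ → PiLp 2 H) (x0 : PiLp 2 H)
    (hx_init : ∀ n : ℤ, n ≤ 0 → x n = x0)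
    (hx_agree : ∀ (k : ℕ) (j : Fin m), j ≠ idx k → x ((k : ℤ) + 1) j = x (k : ℤ) j)
    (f : PiLp 2 H → ℝ) (f' : PiLp 2 H → PiLp 2 H)
    (hf_grad : ∀ z : PiLp 2 H, HasGradientAt f (f' z) z)
    (Lres : ℝ) (hLres_pos : 0 < Lres)
    (hf_lip_res : ∀ (z : PiLp 2 H) (i : Fin m) (u u' : H i),
      ‖f' (upd z i u) - f' (upd z i u')‖ ≤ Lres * ‖u - u'‖)
 :
    ∀ k : ℕ,
      ⟪f' (x (k : ℤ)) - f' (xhatD x d k), x ((k : ℤ) + 1) - x (k : ℤ)⟫ ≤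
        τ * Lres * ‖x ((k : ℤ) + 1) - x (k : ℤ)‖ ^ 2
          + alphaT (Lres / 2) τ x k - alphaT (Lres / 2) τ x (k + 1) := by
  
  intro k
  classical
  set Δ : PiLp 2 H := x ((k:ℤ)+1) - x (k:ℤ) with hΔ
  set y : ℕ → PiLp 2 H := fun t => WithLp.toLp 2 (fun j => x (max ((k:ℤ) - d k j) ((k:ℤ) - τ + t)) j) with hy
  have hdk : ∀ j, (0:ℤ) ≤ (k:ℤ) - d k j := by
    intro j
    have h1 : (d k j : ℤ) ≤ (k:ℤ) := by exact_mod_cast (hd k j).trans (min_le_left _ _)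
    omega
  have hdτ : ∀ j, (k:ℤ) - (τ:ℤ) ≤ (k:ℤ) - d k j := by
    intro j
    have h1 : (d k j : ℤ) ≤ (τ:ℤ) := by exact_mod_cast (hd k j).trans (min_le_right _ _)
    omega
  have hy0 : y 0 = xhatD x d k := by
    ext j
    show x (max ((k:ℤ) - d k j) ((k:ℤ) - τ + ((0:ℕ):ℤ))) j = x ((k:ℤ) - d k j) j
    rw [max_eq_left (by have := hdτ j; push_cast; omega)]
  have hyτ : y τ = x (k:ℤ) := by
    ext j
    show x (max ((k:ℤ) - d k j) ((k:ℤ) - τ + ((τ:ℕ):ℤ))) j = x (k:ℤ) j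
    have e1 : (k:ℤ) - τ + ((τ:ℕ):ℤ) = (k:ℤ) := by push_cast; ring
    rw [e1, max_eq_right (by have := hdk j; omega)]
  have key : ∀ t : ℕ, ‖f' (y (t+1)) - f' (y t)‖ ≤
      Lres * ‖x ((k:ℤ) - τ + t + 1) - x ((k:ℤ) - τ + t)‖ := by
    intro t
    set h : ℤ := (k:ℤ) - τ + t with hh
    have hyt1v : ∀ j, y (t+1) j = x (max ((k:ℤ) - d k j) (h + 1)) j := by
      intro j
      show x (max ((k:ℤ) - d k j) ((k:ℤ) - τ + ((t+1:ℕ):ℤ))) j = _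
      rw [show (k:ℤ) - τ + ((t+1:ℕ):ℤ) = h + 1 by push_cast [hh]; ring]
    have hytv : ∀ j, y t j = x (max ((k:ℤ) - d k j) h) j := fun j => rfl
    by_cases hneg : h < 0
    · have heq : y (t+1) = y t := by
        ext j
        rw [hyt1v, hytv, max_eq_left (by have := hdk j; omega),
          max_eq_left (by have := hdk j; omega)]
      rw [heq, sub_self, norm_zero]
      positivity
    · push_neg at hneg
      set hn : ℕ := h.toNat with hhn
      have hcast : (hn:ℤ) = h := Int.toNat_of_nonneg hneg
      set i : Fin m := idx hn with hi
      have hcoord : ∀ j, j ≠ i → y (t+1) j = y t j := by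
        intro j hji
        rw [hyt1v, hytv]
        rcases le_or_gt ((k:ℤ) - d k j) h with hle | hlt
        · rw [max_eq_right hle, max_eq_right (by omega)]
          have := hx_agree hn j hji
          rw [hcast] at this
          exact this
        · rw [max_eq_left (by omega), max_eq_left (by omega)]
      have hyt1 : y (t+1) = upd (y t) i (y (t+1) i) := by
        ext j
        by_cases hji : j = i
        · subst hji; simp [upd]
        · rw [hcoord j hji]
          simp [upd, Function.update_of_ne hji]
      have hyt : y t = upd (y t) i (y t i) := by
        simp [upd]
      have hlip := hf_lip_res (y t) i (y (t+1) i) (y t i)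
      rw [← hyt1, ← hyt] at hlip
      refine hlip.trans ?_
      have hbnd : ‖y (t+1) i - y t i‖ ≤ ‖x (h + 1) - x h‖ := by
        rcases le_or_gt ((k:ℤ) - d k i) h with hle | hlt
        · rw [hyt1v, hytv, max_eq_right hle, max_eq_right (by omega)]
          have e2 : x (h+1) i - x h i = (x (h+1) - x h) i := rfl
          rw [e2]
          exact coord_norm_le' _ i
        · rw [hyt1v, hytv, max_eq_left (by omega), max_eq_left (by omega)]
          simp [norm_nonneg]
      have h2 : ‖x ((k:ℤ) - τ + t + 1) - x ((k:ℤ) - τ + t)‖ = ‖x (h+1) - x h‖ := by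
        rw [hh]
      rw [h2]
      exact mul_le_mul_of_nonneg_left hbnd hLres_pos.le
  have htel : f' (x (k:ℤ)) - f' (xhatD x d k)
      = ∑ t ∈ Finset.range τ, (f' (y (t+1)) - f' (y t)) := by
    rw [Finset.sum_range_sub (fun t => f' (y t)) τ, hy0, hyτ]
  set b : ℕ → ℝ := fun t => ‖x ((k:ℤ) - τ + t + 1) - x ((k:ℤ) - τ + t)‖ with hb
  have hGnorm : ‖f' (x (k:ℤ)) - f' (xhatD x d k)‖ ≤ ∑ t ∈ Finset.range τ, Lres * b t := by
    rw [htel]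
    exact (norm_sum_le _ _).trans (Finset.sum_le_sum fun t _ => key t)
  have hinner : ⟪f' (x (k:ℤ)) - f' (xhatD x d k), Δ⟫ ≤
      (∑ t ∈ Finset.range τ, Lres * b t) * ‖Δ‖ :=
    (real_inner_le_norm _ _).trans (mul_le_mul_of_nonneg_right hGnorm (norm_nonneg _))
  have hamgm : (∑ t ∈ Finset.range τ, Lres * b t) * ‖Δ‖ ≤
      ∑ t ∈ Finset.range τ, (Lres/2) * (b t ^ 2 + ‖Δ‖ ^ 2) := by
    rw [Finset.sum_mul]
    refine Finset.sum_le_sum fun t _ => ?_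
    have h1 : b t * ‖Δ‖ ≤ (b t ^ 2 + ‖Δ‖ ^ 2) / 2 := by nlinarith [sq_nonneg (b t - ‖Δ‖)]
    calc Lres * b t * ‖Δ‖ = Lres * (b t * ‖Δ‖) := by ring
      _ ≤ Lres * ((b t ^ 2 + ‖Δ‖ ^ 2) / 2) := mul_le_mul_of_nonneg_left h1 hLres_pos.le
      _ = (Lres/2) * (b t ^ 2 + ‖Δ‖ ^ 2) := by ring
  have hsplit : ∑ t ∈ Finset.range τ, (Lres/2) * (b t ^ 2 + ‖Δ‖ ^ 2)
      = (Lres/2) * (∑ t ∈ Finset.range τ, b t ^ 2) + (Lres/2) * τ * ‖Δ‖ ^ 2 := by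
    rw [Finset.sum_congr rfl (fun t _ => by ring :
      ∀ t ∈ Finset.range τ, (Lres/2) * (b t ^ 2 + ‖Δ‖ ^ 2)
        = (Lres/2) * b t ^ 2 + (Lres/2) * ‖Δ‖ ^ 2)]
    rw [Finset.sum_add_distrib, Finset.sum_const, Finset.card_range, nsmul_eq_mul,
      Finset.mul_sum]
    push_cast; ring
  obtain ⟨a, ha⟩ : ∃ a : ℕ → ℝ,
      a = fun j : ℕ => ‖x ((k:ℤ) - τ + (j:ℤ) + 1) - x ((k:ℤ) - τ + (j:ℤ))‖ ^ 2 := ⟨_, rfl⟩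
  have hak : alphaT (Lres/2) τ x k = (Lres/2) * ∑ j ∈ Finset.range τ, ((j:ℝ)+1) * a j := by
    simp only [alphaT, ha]
  have haτ : a τ = ‖Δ‖ ^ 2 := by
    simp only [ha]
    have e1 : (k:ℤ) - (τ:ℤ) + ((τ:ℕ):ℤ) + 1 = (k:ℤ) + 1 := by push_cast; ring
    have e2 : (k:ℤ) - (τ:ℤ) + ((τ:ℕ):ℤ) = (k:ℤ) := by push_cast; ring
    rw [e1, e2]
  have hak1 : alphaT (Lres/2) τ x (k+1)
      = (Lres/2) * ∑ j ∈ Finset.range τ, ((j:ℝ)+1) * a (j+1) := by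
    rw [alphaT]
    congr 1
    refine Finset.sum_congr rfl fun j _ => ?_
    simp only [ha]
    have e1 : ((k+1:ℕ):ℤ) - (τ:ℤ) + (j:ℤ) + 1 = (k:ℤ) - (τ:ℤ) + ((j+1:ℕ):ℤ) + 1 := by
      push_cast; ring
    have e2 : ((k+1:ℕ):ℤ) - (τ:ℤ) + (j:ℤ) = (k:ℤ) - (τ:ℤ) + ((j+1:ℕ):ℤ) := by
      push_cast; ring
    rw [e1, e2]
  have hshift := sum_shift' a τ
  have hsum_ba : ∑ t ∈ Finset.range τ, b t ^ 2 = ∑ t ∈ Finset.range τ, a t :=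
    Finset.sum_congr rfl fun t _ => by rw [ha, hb]
  have hfinal := hinner.trans (hamgm.trans_eq hsplit)
  rw [hak, hak1, hshift, haτ]
  rw [hsum_ba] at hfinal
  nlinarith [hfinal]
end
end
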